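/- arXiv:2510.04433 — 6 statements merged into one kernel-verified Lean document; each statement's English description precedes it below -/
import Mathlib

section
/- Let {φ_i^j} (i=1,…,n, j=1,…,m_i) be a canonical system of eigenvectors and adjoined vectors of the pencil A+μB at μ=0 (so Aφ_i^1=0 and Aφ_i^j=−Bφ_i^{j−1}), and let {q_i^j} ⊂ Y* satisfy A*q_i^{m_i}=0, A*q_i^j=−B*q_i^{j+1}, with biorthogonality ⟨Bφ_i^j, q_k^l⟩ = δ_{ik}δ_{jl}. Define P₂x = Σ_{i,j} ⟨x, B*q_i^j⟩ φ_i^j and Q₂y = Σ_{i,j} ⟨y, q_i^j⟩ Bφ_i^j, P₁ = I_X − P₂, Q₁ = I_Y − Q₂. Then P₁, P₂ are mutually complementary bounded projectors on X, Q₁, Q₂ are mutually complementary bounded projectors on Y, and for all x ∈ D: A P_k x = Q_k A x and B P_k x = Q_k B x for k=1,2. -/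
open Filter Topology

/-- Given a canonical system `{φ i j}` (0-based index `j < m i`) of eigenvectors and adjoined
vectors of the pencil `A + μB` at `μ = 0`, and biorthogonal functionals `{q i j}` satisfying
the adjoint chain relations, the formulas `P₂x = Σ ⟨x, B*q i j⟩ • φ i j`,
`Q₂y = Σ ⟨y, q i j⟩ • B φ i j` define mutually complementary bounded projectors
(`P₁ = I - P₂`, `Q₁ = I - Q₂`) which intertwine `A` and `B`: `A P_k x = Q_k A x` and
`B P_k x = Q_k B x` for `k = 1, 2`. -/
theorem stmt_5
    {X Y : Type*} [NormedAddCommGroup X] [NormedSpace ℂ X] [CompleteSpace X]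
    [NormedAddCommGroup Y] [NormedSpace ℂ Y] [CompleteSpace Y]
    (A B : X →ₗ[ℂ] Y)
    (n : ℕ) (m : Fin n → ℕ) (hm : ∀ i, 0 < m i)
    (φ : Fin n → ℕ → X) (q : Fin n → ℕ → (Y →L[ℂ] ℂ))
    -- the vectors and functionals are indexed by `j < m i`; outside that range they vanish
    (hφ0 : ∀ i j, m i ≤ j → φ i j = 0)
    (hq0 : ∀ i j, m i ≤ j → q i j = 0)
    -- chain relations: `A φ_i^1 = 0`, `A φ_i^j = -B φ_i^{j-1}`
    (heig : ∀ i, A (φ i 0) = 0)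
    (hchain : ∀ i j, j + 1 < m i → A (φ i (j + 1)) = - B (φ i j))
    -- adjoint chain relations: `A* q_i^{m_i} = 0`, `A* q_i^j = -B* q_i^{j+1}`
    (hqlast : ∀ i (x : X), q i (m i - 1) (A x) = 0)
    (hqchain : ∀ i j (x : X), j + 1 < m i → q i j (A x) = - q i (j + 1) (B x))
    -- biorthogonality `⟨B φ_i^j, q_k^l⟩ = δ_{ik} δ_{jl}`
    (hbiorth : ∀ i k j l, j < m i → l < m k →
        q k l (B (φ i j)) = if i = k ∧ j = l then 1 else 0)
    -- the functionals `p_i^j = B* q_i^j` are bounded on `X`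
    (p : Fin n → ℕ → (X →L[ℂ] ℂ))
    (hp : ∀ i j (x : X), p i j x = q i j (B x)) :
    ∃ (P₂ : X →L[ℂ] X) (Q₂ : Y →L[ℂ] Y),
      (∀ x, P₂ x = ∑ i : Fin n, ∑ j ∈ Finset.range (m i), q i j (B x) • φ i j) ∧
      (∀ y, Q₂ y = ∑ i : Fin n, ∑ j ∈ Finset.range (m i), q i j y • B (φ i j)) ∧
      -- `P₁, P₂` and `Q₁, Q₂` are mutually complementary projectors
      (∀ x, P₂ (P₂ x) = P₂ x) ∧
      (∀ y, Q₂ (Q₂ y) = Q₂ y) ∧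
      (∀ x, P₂ (x - P₂ x) = 0) ∧
      (∀ y, Q₂ (y - Q₂ y) = 0) ∧
      -- intertwining relations `A P_k x = Q_k A x`, `B P_k x = Q_k B x`, `k = 1, 2`
      (∀ x, A (P₂ x) = Q₂ (A x)) ∧
      (∀ x, B (P₂ x) = Q₂ (B x)) ∧
      (∀ x, A (x - P₂ x) = A x - Q₂ (A x)) ∧
      (∀ x, B (x - P₂ x) = B x - Q₂ (B x)) := by
 
  classical
  set P : X →L[ℂ] X := ∑ i : Fin n, ∑ j ∈ Finset.range (m i), (p i j).smulRight (φ i j) with hP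
  set Q : Y →L[ℂ] Y := ∑ i : Fin n, ∑ j ∈ Finset.range (m i), (q i j).smulRight (B (φ i j))
    with hQ
  have hPx : ∀ x, P x = ∑ i : Fin n, ∑ j ∈ Finset.range (m i), q i j (B x) • φ i j := by
    intro x
    simp [hP, ContinuousLinearMap.sum_apply, hp]
  have hQy : ∀ y, Q y = ∑ i : Fin n, ∑ j ∈ Finset.range (m i), q i j y • B (φ i j) := by
    intro y
    simp [hQ, ContinuousLinearMap.sum_apply]
  have hkey : ∀ (c : Fin n → ℕ → ℂ) (k : Fin n) (l : ℕ), l < m k →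
      q k l (B (∑ i : Fin n, ∑ j ∈ Finset.range (m i), c i j • φ i j)) = c k l := by
    intro c k l hl
    have h1 : q k l (B (∑ i : Fin n, ∑ j ∈ Finset.range (m i), c i j • φ i j))
        = ∑ i : Fin n, ∑ j ∈ Finset.range (m i), c i j * q k l (B (φ i j)) := by
      simp [map_sum, map_smul, smul_eq_mul]
    rw [h1]
    have h2 : ∀ i ∈ Finset.univ, ∀ j ∈ Finset.range (m i),
        c i j * q k l (B (φ i j)) = if i = k ∧ j = l then c i j else 0 := by
      intro i _ j hj
      rw [hbiorth i k j l (Finset.mem_range.mp hj) hl]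
      split <;> simp
    rw [Finset.sum_congr rfl fun i hi => Finset.sum_congr rfl (h2 i hi)]
    rw [Finset.sum_eq_single k]
    · have : ∀ j ∈ Finset.range (m k),
          (if k = k ∧ j = l then c k j else 0) = if j = l then c k j else 0 := by
        intro j _; simp
      rw [Finset.sum_congr rfl this, Finset.sum_ite_eq' (Finset.range (m k)) l (c k)]
      simp [Finset.mem_range.mpr hl]
    · intro i _ hik
      apply Finset.sum_eq_zero
      intro j _
      simp [hik]
    · intro h; exact absurd (Finset.mem_univ k) h
  have hcoefP : ∀ x k l, l < m k → q k l (B (P x)) = q k l (B x) := by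
    intro x k l hl
    rw [hPx x]
    exact hkey (fun i j => q i j (B x)) k l hl
  have hcoefQ : ∀ y k l, l < m k → q k l (Q y) = q k l y := by
    intro y k l hl
    rw [hQy y]
    have h1 : (∑ i : Fin n, ∑ j ∈ Finset.range (m i), q i j y • B (φ i j))
        = B (∑ i : Fin n, ∑ j ∈ Finset.range (m i), q i j y • φ i j) := by
      simp [map_sum, map_smul]
    rw [h1]
    exact hkey (fun i j => q i j y) k l hl
  have hPP : ∀ x, P (P x) = P x := by
    intro x
    have h1 : ∑ k : Fin n, ∑ l ∈ Finset.range (m k), q k l (B (P x)) • φ k l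
        = ∑ k : Fin n, ∑ l ∈ Finset.range (m k), q k l (B x) • φ k l :=
      Finset.sum_congr rfl fun k _ => Finset.sum_congr rfl fun l hl => by
        rw [hcoefP x k l (Finset.mem_range.mp hl)]
    rw [hPx (P x), h1, ← hPx x]
  have hQQ : ∀ y, Q (Q y) = Q y := by
    intro y
    have h1 : ∑ k : Fin n, ∑ l ∈ Finset.range (m k), q k l (Q y) • B (φ k l)
        = ∑ k : Fin n, ∑ l ∈ Finset.range (m k), q k l y • B (φ k l) :=
      Finset.sum_congr rfl fun k _ => Finset.sum_congr rfl fun l hl => by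
        rw [hcoefQ y k l (Finset.mem_range.mp hl)]
    rw [hQy (Q y), h1, ← hQy y]
  have hAP : ∀ x, A (P x) = Q (A x) := by
    intro x
    rw [hPx x, hQy (A x)]
    rw [map_sum]
    refine Finset.sum_congr rfl fun i _ => ?_
    rw [map_sum]
    simp only [map_smul]
    obtain ⟨M, hM⟩ : ∃ M, m i = M + 1 := ⟨m i - 1, (Nat.succ_pred_eq_of_pos (hm i)).symm⟩
    rw [hM, Finset.sum_range_succ', Finset.sum_range_succ]
    rw [heig i, smul_zero, add_zero]
    have hlast : q i M (A x) = 0 := by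
      have h := hqlast i x
      rw [hM] at h
      simpa using h
    rw [hlast, zero_smul, add_zero]
    refine Finset.sum_congr rfl fun j hj => ?_
    have hj' : j + 1 < m i := by
      rw [hM]; exact Nat.succ_lt_succ (Finset.mem_range.mp hj)
    rw [hchain i j hj', hqchain i j x hj']
    rw [smul_neg, neg_smul]
  have hBP : ∀ x, B (P x) = Q (B x) := by
    intro x
    rw [hPx x, hQy (B x)]
    simp [map_sum, map_smul]
  refine ⟨P, Q, hPx, hQy, hPP, hQQ, ?_, ?_, hAP, hBP, ?_, ?_⟩
  · intro x; rw [map_sub, hPP, sub_self]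
  · intro y; rw [map_sub, hQQ, sub_self]
  · intro x; rw [map_sub, hAP]
  · intro x; rw [map_sub, hBP]
end

section
/- With the projectors of the canonical system, define Q_{2s}^{(j)} y = Σ_{i: m_i=j} ⟨y, q_i^{s+1}⟩ B φ_i^{s+1} and P_{2s}^{(j)} x = Σ_{i: m_i=j} ⟨x, B*q_i^{s+1}⟩ φ_i^{s+1}. Then these are pairwise disjoint projectors (P_{2s}^{(j)} P_{2s'}^{(j')} = δ_{ss'}δ_{jj'} P_{2s}^{(j)} and similarly for Q), and for all x in the domain: Q_{2s}^{(j)} B x = B P_{2s}^{(j)} x, A P_{20} x = 0, Q_{2s} A x = A P_{2(s+1)} x for s=0,…,ν−2, and Q_{2(ν−1)} A x = 0. -/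
open Filter Topology

/-- With the canonical system of a regular pencil `λA + B` of index `ν`, the projectors
`P_{2s}^{(j)} x = Σ_{i : m i = j} ⟨x, B*q_i^{s+1}⟩ φ_i^{s+1}` and
`Q_{2s}^{(j)} y = Σ_{i : m i = j} ⟨y, q_i^{s+1}⟩ B φ_i^{s+1}` are pairwise disjoint
projectors, and `Q_{2s}^{(j)} B x = B P_{2s}^{(j)} x`, `A P_{20} x = 0`,
`Q_{2s} A x = A P_{2(s+1)} x` for `s = 0, …, ν-2`, and `Q_{2(ν-1)} A x = 0`.
(Indices are 0-based: the paper's `φ_i^{s+1}` is `φ i s`.) -/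
theorem stmt_6
    {X Y : Type*} [NormedAddCommGroup X] [NormedSpace ℂ X] [CompleteSpace X]
    [NormedAddCommGroup Y] [NormedSpace ℂ Y] [CompleteSpace Y]
    (A B : X →ₗ[ℂ] Y)
    (n : ℕ) (m : Fin n → ℕ) (hm : ∀ i, 0 < m i)
    (ν : ℕ) (hνpos : 0 < ν) (hmν : ∀ i, m i ≤ ν)
    (φ : Fin n → ℕ → X) (q : Fin n → ℕ → (Y →L[ℂ] ℂ))
    (hφ0 : ∀ i j, m i ≤ j → φ i j = 0)
    (hq0 : ∀ i j, m i ≤ j → q i j = 0)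
    (heig : ∀ i, A (φ i 0) = 0)
    (hchain : ∀ i j, j + 1 < m i → A (φ i (j + 1)) = - B (φ i j))
    (hqlast : ∀ i (x : X), q i (m i - 1) (A x) = 0)
    (hqchain : ∀ i j (x : X), j + 1 < m i → q i j (A x) = - q i (j + 1) (B x))
    (hbiorth : ∀ i k j l, j < m i → l < m k →
        q k l (B (φ i j)) = if i = k ∧ j = l then 1 else 0)
    -- `P_{2s}^{(j)}`, `Q_{2s}^{(j)}` and the partial sums `P_{2s} = Σ_{j ≥ s+1} P_{2s}^{(j)}`,
    -- `Q_{2s} = Σ_{j ≥ s+1} Q_{2s}^{(j)}`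
    (P : ℕ → ℕ → X → X) (Q : ℕ → ℕ → Y → Y) (Ps : ℕ → X → X) (Qs : ℕ → Y → Y)
    (hP : ∀ s j x, P s j x = ∑ i : Fin n, if m i = j then q i s (B x) • φ i s else 0)
    (hQ : ∀ s j y, Q s j y = ∑ i : Fin n, if m i = j then q i s y • B (φ i s) else 0)
    (hPs : ∀ s x, Ps s x = ∑ i : Fin n, q i s (B x) • φ i s)
    (hQs : ∀ s y, Qs s y = ∑ i : Fin n, q i s y • B (φ i s)) :
    -- pairwise disjointness of the projectors
    (∀ s j s' j' (x : X),
        P s j (P s' j' x) = if s = s' ∧ j = j' then P s j x else 0) ∧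
    (∀ s j s' j' (y : Y),
        Q s j (Q s' j' y) = if s = s' ∧ j = j' then Q s j y else 0) ∧
    -- intertwining with `B`
    (∀ s j (x : X), Q s j (B x) = B (P s j x)) ∧
    -- `A P_{20} x = 0`
    (∀ x : X, A (Ps 0 x) = 0) ∧
    -- `Q_{2s} A x = A P_{2(s+1)} x` for `s = 0, …, ν-2`
    (∀ s (x : X), s + 1 < ν → Qs s (A x) = A (Ps (s + 1) x)) ∧
    -- `Q_{2(ν-1)} A x = 0`
    (∀ x : X, Qs (ν - 1) (A x) = 0) := by
  have key : ∀ (i k : Fin n) (s s' : ℕ),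
      q i s (B (φ k s')) = if k = i ∧ s' = s ∧ s < m i then (1:ℂ) else 0 := by
    intro i k s s'
    by_cases hs : s < m i
    · by_cases hs' : s' < m k
      · rw [hbiorth k i s' s hs' hs]
        by_cases h : k = i ∧ s' = s
        · simp [h, hs]
        · rw [if_neg h, if_neg]
          rintro ⟨h1, h2, _⟩; exact h ⟨h1, h2⟩
      · rw [hφ0 k s' (le_of_not_gt hs'), map_zero, map_zero, if_neg]
        rintro ⟨rfl, rfl, h3⟩
        exact hs' h3
    · rw [hq0 i s (le_of_not_gt hs)]
      simp [hs]
  have hqBP : ∀ (i : Fin n) s s' j' (x : X),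
      q i s (B (P s' j' x)) =
        if m i = j' ∧ s' = s ∧ s < m i then q i s (B x) else 0 := by
    intro i s s' j' x
    rw [hP, map_sum, map_sum]
    simp only [apply_ite B, apply_ite (q i s), map_zero, map_smul, smul_eq_mul, key]
    rw [Finset.sum_eq_single i]
    · by_cases h1 : m i = j'
      · by_cases h2 : s' = s ∧ s < m i
        · obtain ⟨rfl, h3⟩ := h2
          simp [h1, h3]
        · rw [if_pos h1, if_neg (fun h => h2 ⟨h.2.1, h.2.2⟩),
            if_neg (fun h => h2 ⟨h.2.1, h.2.2⟩), mul_zero]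
      · simp [h1]
    · intro k _ hk
      simp [hk]
    · simp
  have hqQ : ∀ (i : Fin n) s s' j' (y : Y),
      q i s (Q s' j' y) = if m i = j' ∧ s' = s ∧ s < m i then q i s y else 0 := by
    intro i s s' j' y
    rw [hQ, map_sum]
    simp only [apply_ite (q i s), map_zero, map_smul, smul_eq_mul, key]
    rw [Finset.sum_eq_single i]
    · by_cases h1 : m i = j'
      · by_cases h2 : s' = s ∧ s < m i
        · obtain ⟨rfl, h3⟩ := h2
          simp [h1, h3]
        · rw [if_pos h1, if_neg (fun h => h2 ⟨h.2.1, h.2.2⟩),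
            if_neg (fun h => h2 ⟨h.2.1, h.2.2⟩), mul_zero]
      · simp [h1]
    · intro k _ hk
      simp [hk]
    · simp
  refine ⟨?_, ?_, ?_, ?_, ?_, ?_⟩
  · intro s j s' j' x
    rw [hP s j]
    simp only [hqBP]
    by_cases h : s = s' ∧ j = j'
    · obtain ⟨rfl, rfl⟩ := h
      rw [if_pos ⟨rfl, rfl⟩, hP]
      apply Finset.sum_congr rfl
      intro i _
      by_cases hij : m i = j
      · simp only [if_pos hij]
        by_cases hs : s < m i
        · rw [if_pos ⟨hij, by trivial, hs⟩]
        · rw [if_neg (fun h => hs h.2.2), zero_smul, hφ0 i s (le_of_not_gt hs), smul_zero]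
      · simp only [if_neg hij]
    · rw [if_neg h]
      apply Finset.sum_eq_zero
      intro i _
      by_cases h1 : m i = j
      · rw [if_pos h1, if_neg, zero_smul]
        intro h2
        exact h ⟨h2.2.1.symm, by omega⟩
      · rw [if_neg h1]
  · intro s j s' j' y
    rw [hQ s j]
    simp only [hqQ]
    by_cases h : s = s' ∧ j = j'
    · obtain ⟨rfl, rfl⟩ := h
      rw [if_pos ⟨rfl, rfl⟩, hQ]
      apply Finset.sum_congr rfl
      intro i _
      by_cases hij : m i = j
      · simp only [if_pos hij]
        by_cases hs : s < m i
        · rw [if_pos ⟨hij, by trivial, hs⟩]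
        · rw [if_neg (fun h => hs h.2.2), zero_smul, hφ0 i s (le_of_not_gt hs), map_zero, smul_zero]
      · simp only [if_neg hij]
    · rw [if_neg h]
      apply Finset.sum_eq_zero
      intro i _
      by_cases h1 : m i = j
      · rw [if_pos h1, if_neg, zero_smul]
        intro h2
        exact h ⟨h2.2.1.symm, by omega⟩
      · rw [if_neg h1]
  · intro s j x
    rw [hQ, hP, map_sum]
    apply Finset.sum_congr rfl
    intro i _
    rw [apply_ite B, map_smul, map_zero]
  · intro x
    rw [hPs, map_sum]
    simp [heig]
  · intro s x _
    rw [hQs, hPs, map_sum]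
    apply Finset.sum_congr rfl
    intro i _
    rcases lt_trichotomy (s + 1) (m i) with h | h | h
    · rw [hqchain i s x h, map_smul, hchain i s h]
      simp
    · have h0 : (q i s) (A x) = 0 := by
        rw [show s = m i - 1 by omega]; exact hqlast i x
      rw [h0, hφ0 i (s + 1) (by omega), zero_smul, smul_zero, map_zero]
    · rw [hq0 i s (by omega), hφ0 i (s + 1) (by omega)]
      simp
  · intro x
    rw [hQs]
    apply Finset.sum_eq_zero
    intro i _
    by_cases h : m i = ν
    · have : ν - 1 = m i - 1 := by omega
      rw [this, hqlast]
      simp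
    · rw [hq0 i (ν - 1) (by have := hmν i; omega)]
      simp
end

section
/- Define Ã = A + Σ_{i=1}^n ⟨·, B*q_i^1⟩ Bφ_i^{m_i} : D → Y. Then Ã has a bounded inverse Ã⁻¹ ∈ L(Y, D), given explicitly by Ã⁻¹ = A^{(−1)} + Σ_{i=1}^n ⟨·, q_i^{m_i}⟩ φ_i^1, where A^{(−1)} is the semi-inverse of A determined by A^{(−1)}A = P₁ + P_{2Σ}, A A^{(−1)} = Q₁ + Q_{2Σ}, A^{(−1)} = (P₁+P_{2Σ})A^{(−1)}. Moreover Ã⁻¹ A x = (P₁ + P_{2Σ}) x for x ∈ D and A Ã⁻¹ y = (Q₁ + Q_{2Σ}) y for y ∈ Y. -/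
open Filter Topology

/-- The operator `Ã = A + Σᵢ ⟨·, B*q_i^1⟩ B φ_i^{m_i}` has a bounded inverse given explicitly
by `Ã⁻¹ = A^{(-1)} + Σᵢ ⟨·, q_i^{m_i}⟩ φ_i^1`, where `A^{(-1)}` is the semi-inverse of `A`
determined by `A^{(-1)}A = P₁ + P_{2Σ} = I - P_{20}`, `A A^{(-1)} = Q₁ + Q_{2Σ} = I - Q_{2*}`
and `A^{(-1)} = A^{(-1)}(Q₁ + Q_{2Σ})` (equivalently `(P₁+P_{2Σ})A^{(-1)} = A^{(-1)}`).
Moreover `Ã⁻¹ A x = (P₁ + P_{2Σ}) x` and `A Ã⁻¹ y = (Q₁ + Q_{2Σ}) y`.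
(Indices are 0-based: the paper's `φ_i^1` is `φ i 0` and `q_i^{m_i}` is `q i (m i - 1)`.) -/
theorem stmt_7
    {X Y : Type*} [NormedAddCommGroup X] [NormedSpace ℂ X] [CompleteSpace X]
    [NormedAddCommGroup Y] [NormedSpace ℂ Y] [CompleteSpace Y]
    (A B : X →ₗ[ℂ] Y)
    (n : ℕ) (m : Fin n → ℕ) (hm : ∀ i, 0 < m i)
    (φ : Fin n → ℕ → X) (q : Fin n → ℕ → (Y →L[ℂ] ℂ))
    (hφ0 : ∀ i j, m i ≤ j → φ i j = 0)
    (hq0 : ∀ i j, m i ≤ j → q i j = 0)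
    (heig : ∀ i, A (φ i 0) = 0)
    (hchain : ∀ i j, j + 1 < m i → A (φ i (j + 1)) = - B (φ i j))
    (hqlast : ∀ i (x : X), q i (m i - 1) (A x) = 0)
    (hqchain : ∀ i j (x : X), j + 1 < m i → q i j (A x) = - q i (j + 1) (B x))
    (hbiorth : ∀ i k j l, j < m i → l < m k →
        q k l (B (φ i j)) = if i = k ∧ j = l then 1 else 0)
    (hindep : LinearIndependent ℂ (fun i : Fin n => φ i 0))
    -- the (bounded) semi-inverse `A^{(-1)}` of `A`
    (Ainv : Y →L[ℂ] X)
    -- `A^{(-1)} A = P₁ + P_{2Σ} = I - P_{20}`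
    (hAinvA : ∀ x, Ainv (A x) = x - ∑ i : Fin n, q i 0 (B x) • φ i 0)
    -- `A A^{(-1)} = Q₁ + Q_{2Σ} = I - Q_{2*}`
    (hAAinv : ∀ y, A (Ainv y) = y - ∑ i : Fin n, q i (m i - 1) y • B (φ i (m i - 1)))
    -- `A^{(-1)} = A^{(-1)} (Q₁ + Q_{2Σ})`
    (hAinvQ : ∀ y, Ainv y = Ainv (y - ∑ i : Fin n, q i (m i - 1) y • B (φ i (m i - 1))))
    -- `A^{(-1)} = (P₁ + P_{2Σ}) A^{(-1)}`, i.e. `P_{20} A^{(-1)} = 0`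
    (hPAinv : ∀ y, (∑ i : Fin n, q i 0 (B (Ainv y)) • φ i 0) = 0) :
    let tA : X → Y := fun x => A x + ∑ i : Fin n, q i 0 (B x) • B (φ i (m i - 1))
    let tAinv : Y → X := fun y => Ainv y + ∑ i : Fin n, q i (m i - 1) y • φ i 0
    -- `Ã⁻¹` is a two-sided inverse of `Ã`
    (∀ x, tAinv (tA x) = x) ∧
    (∀ y, tA (tAinv y) = y) ∧
    -- `Ã⁻¹ A x = (P₁ + P_{2Σ}) x`
    (∀ x, tAinv (A x) = x - ∑ i : Fin n, q i 0 (B x) • φ i 0) ∧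
    -- `A Ã⁻¹ y = (Q₁ + Q_{2Σ}) y`
    (∀ y, A (tAinv y) = y - ∑ i : Fin n, q i (m i - 1) y • B (φ i (m i - 1))) ∧
    -- `Ã⁻¹` is bounded: `Ã⁻¹ ∈ L(Y, D)`
    (∃ T : Y →L[ℂ] X, ∀ y, T y = tAinv y) := by
  intro tA tAinv
  have hmlt : ∀ i : Fin n, m i - 1 < m i := fun i => Nat.sub_lt (hm i) one_pos
  -- orthogonality of A^{(-1)} range to q_i^0
  have hq0Ainv : ∀ (y : Y) (i : Fin n), q i 0 (B (Ainv y)) = 0 := by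
    intro y i
    exact Fintype.linearIndependent_iff.mp hindep
      (fun i => q i 0 (B (Ainv y))) (hPAinv y) i
  have hdiag : ∀ i : Fin n,
      ∑ k : Fin n, q k (m k - 1) (B (φ i (m i - 1))) • B (φ k (m k - 1))
        = B (φ i (m i - 1)) := by
    intro i
    rw [Finset.sum_eq_single i]
    · rw [hbiorth i i _ _ (hmlt i) (hmlt i)]; simp
    · intro k _ hk
      rw [hbiorth i k _ _ (hmlt i) (hmlt k), if_neg (by simp [Ne.symm hk])]
      simp
    · simp
  have hAinvB : ∀ i : Fin n, Ainv (B (φ i (m i - 1))) = 0 := by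
    intro i
    rw [hAinvQ (B (φ i (m i - 1))), hdiag i]
    simp
  have hqtA : ∀ (x : X) (k : Fin n), q k (m k - 1) (tA x) = q k 0 (B x) := by
    intro x k
    show q k (m k - 1) (A x + ∑ i : Fin n, q i 0 (B x) • B (φ i (m i - 1))) = _
    rw [map_add, hqlast, map_sum, zero_add, Finset.sum_eq_single k]
    · rw [map_smul, hbiorth k k _ _ (hmlt k) (hmlt k)]; simp
    · intro i _ hi
      rw [map_smul, hbiorth i k _ _ (hmlt i) (hmlt k), if_neg (by simp [hi])]
      simp
    · simp
  have hleft : ∀ x, tAinv (tA x) = x := by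
    intro x
    show Ainv (tA x) + ∑ k : Fin n, q k (m k - 1) (tA x) • φ k 0 = x
    have h1 : Ainv (tA x) = x - ∑ i : Fin n, q i 0 (B x) • φ i 0 := by
      show Ainv (A x + ∑ i : Fin n, q i 0 (B x) • B (φ i (m i - 1))) = _
      rw [map_add, map_sum, hAinvA]
      simp [hAinvB]
    rw [h1]
    simp only [hqtA]
    abel
  have hAtAinv : ∀ y, A (tAinv y)
      = y - ∑ i : Fin n, q i (m i - 1) y • B (φ i (m i - 1)) := by
    intro y
    show A (Ainv y + ∑ k : Fin n, q k (m k - 1) y • φ k 0) = _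
    rw [map_add, map_sum, hAAinv]
    simp [heig]
  have hqBtAinv : ∀ (y : Y) (i : Fin n), q i 0 (B (tAinv y)) = q i (m i - 1) y := by
    intro y i
    show q i 0 (B (Ainv y + ∑ k : Fin n, q k (m k - 1) y • φ k 0)) = _
    rw [map_add, map_add, map_sum, map_sum, hq0Ainv, zero_add,
      Finset.sum_eq_single i]
    · rw [map_smul, map_smul, hbiorth i i _ _ (hm i) (hm i)]; simp
    · intro k _ hk
      rw [map_smul, map_smul, hbiorth k i _ _ (hm k) (hm i), if_neg (by simp [hk])]
      simp
    · simp
  refine ⟨hleft, ?_, ?_, hAtAinv, ?_⟩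
  · intro y
    show A (tAinv y) + ∑ i : Fin n, q i 0 (B (tAinv y)) • B (φ i (m i - 1)) = y
    rw [hAtAinv]
    simp only [hqBtAinv]
    abel
  · intro x
    show Ainv (A x) + ∑ k : Fin n, q k (m k - 1) (A x) • φ k 0 = _
    rw [hAinvA]
    simp [hqlast]
  · refine ⟨Ainv + ∑ i : Fin n, (q i (m i - 1)).smulRight (φ i 0), fun y => ?_⟩
    simp [tAinv, ContinuousLinearMap.sum_apply]
end

section
/- (Local implicit function without differentiability, Lipschitz version) Let F ∈ C(T×D_X×D_Y, Z) with T ⊆ ℝ an interval and D_X ⊆ X, D_Y ⊆ Y open, satisfy a local Lipschitz condition in (x,y). Suppose (t',x',y') satisfies F(t',x',y')=0 and there exist neighborhoods U_δ(t',x') and U_ε(y') and an invertible operator W ∈ L(Y,Z) with W⁻¹ ∈ L(Z,Y) such that ‖F(t,x,y¹)−F(t,x,y²)−W[y¹−y²]‖ ≤ k(δ,ε)‖y¹−y²‖ for all (t,x) ∈ U_δ(t',x'), y¹,y² ∈ U_ε(y'), with lim_{δ,ε→0} k(δ,ε) < ‖W⁻¹‖⁻¹. Then there exist neighborhoods U_r(t',x')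 ⊂ U_δ(t',x') and U_ρ(y') ⊂ U_ε(y') and a unique continuous function υ : U_r(t',x') → U_ρ(y') with υ(t',x')=y', F(t,x,υ(t,x))=0 on U_r(t',x'), and υ Lipschitz in x on U_r(t',x'). -/
open Filter Topology

set_option maxHeartbeats 1000000

/-- Local implicit function theorem without differentiability (Lipschitz version):
if `F` is continuous on `T × D_X × D_Y`, locally Lipschitz in `(x, y)`, `F(t',x',y') = 0`,
and near `(t',x',y')` the map `F` satisfies the contraction-type inequality
`‖F(t,x,y¹) - F(t,x,y²) - W[y¹ - y²]‖ ≤ k ‖y¹ - y²‖` with an invertible `W ∈ L(Y,Z)` and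
`k ‖W⁻¹‖ < 1`, then there exist neighborhoods `U_r(t',x')`, `U_ρ(y')` and a unique continuous
function `υ` with `υ(t',x') = y'`, `F(t,x,υ(t,x)) = 0`, `υ` Lipschitz in `x`. -/
theorem stmt_8
    {X Y Z : Type*} [NormedAddCommGroup X] [NormedSpace ℝ X] [CompleteSpace X]
    [NormedAddCommGroup Y] [NormedSpace ℝ Y] [CompleteSpace Y]
    [NormedAddCommGroup Z] [NormedSpace ℝ Z] [CompleteSpace Z]
    (T : Set ℝ) (hT : T.OrdConnected)
    (DX : Set X) (DY : Set Y) (hDX : IsOpen DX) (hDY : IsOpen DY)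
    (F : ℝ → X → Y → Z)
    (hFcont : ContinuousOn (fun p : ℝ × X × Y => F p.1 p.2.1 p.2.2) (T ×ˢ DX ×ˢ DY))
    -- `F` satisfies locally a Lipschitz condition with respect to `(x, y)` on `T × D_X × D_Y`
    (hFlip : ∀ t' ∈ T, ∀ x' ∈ DX, ∀ y' ∈ DY, ∃ δ > (0:ℝ), ∃ L ≥ (0:ℝ),
        ∀ t ∈ T, |t - t'| < δ →
        ∀ x₁ ∈ DX, ∀ x₂ ∈ DX, ‖x₁ - x'‖ < δ → ‖x₂ - x'‖ < δ →
        ∀ y₁ ∈ DY, ∀ y₂ ∈ DY, ‖y₁ - y'‖ < δ → ‖y₂ - y'‖ < δ →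
          ‖F t x₁ y₁ - F t x₂ y₂‖ ≤ L * (‖x₁ - x₂‖ + ‖y₁ - y₂‖))
    (t' : ℝ) (x' : X) (y' : Y)
    (ht' : t' ∈ T) (hx' : x' ∈ DX) (hy' : y' ∈ DY)
    (hsol : F t' x' y' = 0)
    (W : Y →L[ℝ] Z) (Winv : Z →L[ℝ] Y)
    (hW₁ : ∀ y, Winv (W y) = y) (hW₂ : ∀ z, W (Winv z) = z)
    (δ ε k : ℝ) (hδ : 0 < δ) (hε : 0 < ε) (hk : 0 ≤ k) (hkW : k * ‖Winv‖ < 1)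
    (hcontr : ∀ t ∈ T, |t - t'| < δ → ∀ x ∈ DX, ‖x - x'‖ < δ →
        ∀ y₁ ∈ DY, ∀ y₂ ∈ DY, ‖y₁ - y'‖ < ε → ‖y₂ - y'‖ < ε →
          ‖F t x y₁ - F t x y₂ - W (y₁ - y₂)‖ ≤ k * ‖y₁ - y₂‖) :
    ∃ r > (0:ℝ), ∃ ρ > (0:ℝ), r ≤ δ ∧ ρ ≤ ε ∧
      Metric.ball x' r ⊆ DX ∧ Metric.ball y' ρ ⊆ DY ∧
      ∃ υ : ℝ → X → Y,
        υ t' x' = y' ∧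
        -- `υ` solves `F(t, x, υ(t,x)) = 0` and maps into `U_ρ(y')`
        (∀ t ∈ T, |t - t'| < r → ∀ x, ‖x - x'‖ < r →
            ‖υ t x - y'‖ < ρ ∧ F t x (υ t x) = 0) ∧
        -- continuity of `υ`
        ContinuousOn (fun p : ℝ × X => υ p.1 p.2)
          ((T ∩ Metric.ball t' r) ×ˢ Metric.ball x' r) ∧
        -- `υ` is Lipschitz in `x`
        (∃ L ≥ (0:ℝ), ∀ t ∈ T, |t - t'| < r →
            ∀ x₁, ‖x₁ - x'‖ < r → ∀ x₂, ‖x₂ - x'‖ < r →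
              ‖υ t x₁ - υ t x₂‖ ≤ L * ‖x₁ - x₂‖) ∧
        -- uniqueness of the solution in `U_ρ(y')`
        (∀ t ∈ T, |t - t'| < r → ∀ x, ‖x - x'‖ < r →
            ∀ y, ‖y - y'‖ < ρ → F t x y = 0 → y = υ t x) := by

  classical
  have hq0 : 0 ≤ k * ‖Winv‖ := mul_nonneg hk (norm_nonneg _)
  set q : ℝ := k * ‖Winv‖ with hqdef
  have hq1 : q < 1 := hkW
  have h1q : (0:ℝ) < 1 - q := by linarith
  obtain ⟨ε₁, hε₁, hballY⟩ := Metric.isOpen_iff.1 hDY y' hy'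
  obtain ⟨ε₂, hε₂, hballX⟩ := Metric.isOpen_iff.1 hDX x' hx'
  obtain ⟨δ₀, hδ₀, L₀, hL₀, hlip⟩ := hFlip t' ht' x' hx' y' hy'
  set ρ : ℝ := min (min ε ε₁) δ₀ with hρdef
  have hρ0 : 0 < ρ := lt_min (lt_min hε hε₁) hδ₀
  have hρε : ρ ≤ ε := (min_le_left _ _).trans (min_le_left _ _)
  have hρε₁ : ρ ≤ ε₁ := (min_le_left _ _).trans (min_le_right _ _)
  have hρδ₀ : ρ ≤ δ₀ := min_le_right _ _
  set ρ₁ : ℝ := ρ / 2 with hρ₁def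
  have hρ₁0 : 0 < ρ₁ := half_pos hρ0
  have hρ₁ρ : ρ₁ < ρ := half_lt_self hρ0
  have hρDY : Metric.ball y' ρ ⊆ DY :=
    (Metric.ball_subset_ball hρε₁).trans hballY
  -- helper for membership of the small closed ball
  have hmemDY : ∀ y : Y, ‖y - y'‖ ≤ ρ₁ → y ∈ DY ∧ ‖y - y'‖ < ε ∧ ‖y - y'‖ < δ₀ := by
    intro y hy
    have h1 : ‖y - y'‖ < ρ := lt_of_le_of_lt hy hρ₁ρ
    exact ⟨hρDY (by simpa [Metric.mem_ball, dist_eq_norm] using h1),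
      lt_of_lt_of_le h1 hρε, lt_of_lt_of_le h1 hρδ₀⟩
  -- continuity of F at the base point gives smallness of F t x y' near (t', x')
  have hcW : 0 < (1 - q) * ρ₁ / (‖Winv‖ + 1) := by positivity
  have hc := hFcont (t', x', y') ⟨ht', hx', hy'⟩
  rw [Metric.continuousWithinAt_iff] at hc
  obtain ⟨r₃, hr₃0, hr₃⟩ := hc _ hcW
  set r : ℝ := min (min δ δ₀) (min ε₂ r₃) with hrdef
  have hr0 : 0 < r := lt_min (lt_min hδ hδ₀) (lt_min hε₂ hr₃0)
  have hrδ : r ≤ δ := (min_le_left _ _).trans (min_le_left _ _)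
  have hrδ₀ : r ≤ δ₀ := (min_le_left _ _).trans (min_le_right _ _)
  have hrε₂ : r ≤ ε₂ := (min_le_right _ _).trans (min_le_left _ _)
  have hrr₃ : r ≤ r₃ := (min_le_right _ _).trans (min_le_right _ _)
  have hrDX : Metric.ball x' r ⊆ DX :=
    (Metric.ball_subset_ball hrε₂).trans hballX
  have hxDX : ∀ x : X, ‖x - x'‖ < r → x ∈ DX := by
    intro x hx
    exact hrDX (by simpa [Metric.mem_ball, dist_eq_norm] using hx)
  have hFsmall : ∀ t ∈ T, |t - t'| < r → ∀ x, ‖x - x'‖ < r →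
      ‖Winv (F t x y')‖ ≤ (1 - q) * ρ₁ := by
    intro t ht htr x hxr
    have hx : x ∈ DX := hxDX x hxr
    have hd : dist ((t, x, y') : ℝ × X × Y) (t', x', y') < r₃ := by
      rw [Prod.dist_eq, Prod.dist_eq, dist_self]
      refine max_lt ?_ (max_lt ?_ hr₃0)
      · rw [Real.dist_eq]; exact lt_of_lt_of_le htr hrr₃
      · rw [dist_eq_norm]; exact lt_of_lt_of_le hxr hrr₃
    have hF := hr₃ ⟨ht, hx, hy'⟩ hd
    simp only [hsol, dist_zero_right] at hF
    calc ‖Winv (F t x y')‖ ≤ ‖Winv‖ * ‖F t x y'‖ := Winv.le_opNorm _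
      _ ≤ (‖Winv‖ + 1) * ((1 - q) * ρ₁ / (‖Winv‖ + 1)) := by
          apply mul_le_mul (by linarith [norm_nonneg Winv]) hF.le (norm_nonneg _)
          positivity
      _ = (1 - q) * ρ₁ := by field_simp
  -- the auxiliary map G
  set G : ℝ → X → Y → Y := fun t x y => y - Winv (F t x y) with hGdef
  have hGsub : ∀ t x (y₁ y₂ : Y),
      G t x y₁ - G t x y₂ = -(Winv (F t x y₁ - F t x y₂ - W (y₁ - y₂))) := by
    intro t x y₁ y₂
    simp only [hGdef, map_sub, hW₁]
    abel
  have hGcontr : ∀ t ∈ T, |t - t'| < r → ∀ x, ‖x - x'‖ < r →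
      ∀ y₁ ∈ DY, ∀ y₂ ∈ DY, ‖y₁ - y'‖ < ε → ‖y₂ - y'‖ < ε →
        ‖G t x y₁ - G t x y₂‖ ≤ q * ‖y₁ - y₂‖ := by
    intro t ht htr x hxr y₁ hy₁ y₂ hy₂ hy₁ε hy₂ε
    have hx : x ∈ DX := hxDX x hxr
    rw [hGsub, norm_neg]
    calc ‖Winv (F t x y₁ - F t x y₂ - W (y₁ - y₂))‖
        ≤ ‖Winv‖ * ‖F t x y₁ - F t x y₂ - W (y₁ - y₂)‖ := Winv.le_opNorm _
      _ ≤ ‖Winv‖ * (k * ‖y₁ - y₂‖) := by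
          exact mul_le_mul_of_nonneg_left
            (hcontr t ht (lt_of_lt_of_le htr hrδ) x hx (lt_of_lt_of_le hxr hrδ)
              y₁ hy₁ y₂ hy₂ hy₁ε hy₂ε) (norm_nonneg _)
      _ = q * ‖y₁ - y₂‖ := by rw [hqdef]; ring
  have hGmaps : ∀ t ∈ T, |t - t'| < r → ∀ x, ‖x - x'‖ < r →
      ∀ y, ‖y - y'‖ ≤ ρ₁ → ‖G t x y - y'‖ ≤ ρ₁ := by
    intro t ht htr x hxr y hy
    obtain ⟨hyDY, hyε, -⟩ := hmemDY y hy
    have h1 : ‖G t x y - G t x y'‖ ≤ q * ‖y - y'‖ :=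
      hGcontr t ht htr x hxr y hyDY y' hy' hyε (by simpa using hε)
    have h2 : G t x y' - y' = -(Winv (F t x y')) := by
      simp only [hGdef]; abel
    have h3 : ‖G t x y' - y'‖ ≤ (1 - q) * ρ₁ := by
      rw [h2, norm_neg]; exact hFsmall t ht htr x hxr
    calc ‖G t x y - y'‖ = ‖(G t x y - G t x y') + (G t x y' - y')‖ := by
          congr 1; abel
      _ ≤ ‖G t x y - G t x y'‖ + ‖G t x y' - y'‖ := norm_add_le _ _
      _ ≤ q * ‖y - y'‖ + (1 - q) * ρ₁ := add_le_add h1 h3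
      _ ≤ ρ₁ := by nlinarith
  -- existence of fixed points
  have hexists : ∀ t x, ∃ u : Y, (t ∈ T ∧ |t - t'| < r ∧ ‖x - x'‖ < r) →
      ‖u - y'‖ ≤ ρ₁ ∧ F t x u = 0 := by
    intro t x
    by_cases h : t ∈ T ∧ |t - t'| < r ∧ ‖x - x'‖ < r
    · obtain ⟨ht, htr, hxr⟩ := h
      have hsc : IsComplete (Metric.closedBall y' ρ₁) :=
        Metric.isClosed_closedBall.isComplete
      have hsf : Set.MapsTo (G t x) (Metric.closedBall y' ρ₁) (Metric.closedBall y' ρ₁) := by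
        intro y hy
        rw [Metric.mem_closedBall, dist_eq_norm] at hy ⊢
        exact hGmaps t ht htr x hxr y hy
      have hK : ContractingWith ⟨q, hq0⟩
          (hsf.restrict (G t x) (Metric.closedBall y' ρ₁) (Metric.closedBall y' ρ₁)) := by
        constructor
        · exact_mod_cast hq1
        · apply LipschitzWith.of_dist_le_mul
          rintro ⟨y₁, hy₁⟩ ⟨y₂, hy₂⟩
          rw [Metric.mem_closedBall, dist_eq_norm] at hy₁ hy₂
          obtain ⟨h₁DY, h₁ε, -⟩ := hmemDY y₁ hy₁
          obtain ⟨h₂DY, h₂ε, -⟩ := hmemDY y₂ hy₂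
          rw [Subtype.dist_eq, Subtype.dist_eq, Set.MapsTo.val_restrict_apply,
            Set.MapsTo.val_restrict_apply, dist_eq_norm, dist_eq_norm]
          exact hGcontr t ht htr x hxr y₁ h₁DY y₂ h₂DY h₁ε h₂ε
      obtain ⟨u, hus, hufix, -⟩ := hK.exists_fixedPoint'
        hsc hsf (Metric.mem_closedBall_self hρ₁0.le) (edist_ne_top _ _)
      refine ⟨u, fun _ => ⟨?_, ?_⟩⟩
      · rw [Metric.mem_closedBall, dist_eq_norm] at hus; exact hus
      · have h0 : Winv (F t x u) = 0 := by
          have h := hufix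
          simp only [Function.IsFixedPt, hGdef] at h
          exact sub_eq_self.mp h
        have h1 := congrArg W h0
        rwa [hW₂, map_zero] at h1
    · exact ⟨y', fun hc => absurd hc h⟩
  choose υ hυ using hexists
  have hυfix : ∀ t ∈ T, |t - t'| < r → ∀ x, ‖x - x'‖ < r →
      ‖υ t x - y'‖ ≤ ρ₁ ∧ F t x (υ t x) = 0 :=
    fun t ht htr x hxr => hυ t x ⟨ht, htr, hxr⟩
  -- uniqueness of zeros
  have huniq : ∀ t ∈ T, |t - t'| < r → ∀ x, ‖x - x'‖ < r →
      ∀ y₁ ∈ DY, ∀ y₂ ∈ DY, ‖y₁ - y'‖ < ε → ‖y₂ - y'‖ < ε →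
        F t x y₁ = 0 → F t x y₂ = 0 → y₁ = y₂ := by
    intro t ht htr x hxr y₁ hy₁ y₂ hy₂ hy₁ε hy₂ε hz₁ hz₂
    have h1 : G t x y₁ = y₁ := by simp [hGdef, hz₁]
    have h2 : G t x y₂ = y₂ := by simp [hGdef, hz₂]
    have hle := hGcontr t ht htr x hxr y₁ hy₁ y₂ hy₂ hy₁ε hy₂ε
    rw [h1, h2] at hle
    have hzero : ‖y₁ - y₂‖ ≤ 0 := by nlinarith [norm_nonneg (y₁ - y₂)]
    have := le_antisymm hzero (norm_nonneg _)
    rw [norm_eq_zero, sub_eq_zero] at this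
    exact this
  refine ⟨r, hr0, ρ, hρ0, hrδ, hρε, hrDX, hρDY, υ, ?_, ?_, ?_, ?_, ?_⟩
  · -- υ t' x' = y'
    have htrr : |t' - t'| < r := by simpa using hr0
    have hxrr : ‖x' - x'‖ < r := by simpa using hr0
    obtain ⟨hb, hz⟩ := hυfix t' ht' htrr x' hxrr
    obtain ⟨hDY', hε', -⟩ := hmemDY _ hb
    exact huniq t' ht' htrr x' hxrr (υ t' x') hDY' y' hy' hε' (by simpa using hε) hz hsol
  · -- solution property
    intro t ht htr x hxr
    obtain ⟨hb, hz⟩ := hυfix t ht htr x hxr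
    exact ⟨lt_of_le_of_lt hb hρ₁ρ, hz⟩
  · -- continuity
    intro p₀ hp₀
    obtain ⟨⟨ht₀T, ht₀b⟩, hx₀b⟩ := hp₀
    have ht₀r : |p₀.1 - t'| < r := by rwa [Metric.mem_ball, Real.dist_eq] at ht₀b
    have hx₀r : ‖p₀.2 - x'‖ < r := by rwa [Metric.mem_ball, dist_eq_norm] at hx₀b
    obtain ⟨hu₀b, hu₀z⟩ := hυfix p₀.1 ht₀T ht₀r p₀.2 hx₀r
    obtain ⟨hu₀DY, hu₀ε, -⟩ := hmemDY _ hu₀b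
    set u₀ : Y := υ p₀.1 p₀.2 with hu₀def
    set S : Set (ℝ × X) := (T ∩ Metric.ball t' r) ×ˢ Metric.ball x' r with hSdef
    have hcomp : ContinuousWithinAt (fun p : ℝ × X => F p.1 p.2 u₀) S p₀ := by
      have hinner : Continuous (fun p : ℝ × X => (p.1, p.2, u₀)) := by fun_prop
      have h1 : ContinuousWithinAt (fun p : ℝ × X × Y => F p.1 p.2.1 p.2.2)
          (T ×ˢ DX ×ˢ DY) (p₀.1, p₀.2, u₀) :=
        hFcont _ ⟨ht₀T, hxDX _ hx₀r, hu₀DY⟩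
      have hmaps : Set.MapsTo (fun p : ℝ × X => (p.1, p.2, u₀)) S (T ×ˢ DX ×ˢ DY) := by
        rintro ⟨t, x⟩ ⟨⟨htT, -⟩, hxb⟩
        exact ⟨htT, hrDX hxb, hu₀DY⟩
      have hcc := ContinuousWithinAt.comp (f := fun p : ℝ × X => (p.1, p.2, u₀))
        (x := p₀) h1 hinner.continuousWithinAt hmaps
      exact hcc
    have hbound : ∀ p ∈ S, dist (υ p.1 p.2) u₀ ≤
        (‖Winv‖ / (1 - q)) * ‖F p.1 p.2 u₀‖ := by
      rintro ⟨t, x⟩ ⟨⟨htT, htb⟩, hxb⟩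
      have htr : |t - t'| < r := by rwa [Metric.mem_ball, Real.dist_eq] at htb
      have hxr : ‖x - x'‖ < r := by rwa [Metric.mem_ball, dist_eq_norm] at hxb
      obtain ⟨hub, huz⟩ := hυfix t htT htr x hxr
      obtain ⟨huDY, huε, -⟩ := hmemDY _ hub
      have hfix : G t x (υ t x) = υ t x := by simp [hGdef, huz]
      have h1 : ‖G t x (υ t x) - G t x u₀‖ ≤ q * ‖υ t x - u₀‖ :=
        hGcontr t htT htr x hxr (υ t x) huDY u₀ hu₀DY huε hu₀ε
      rw [hfix] at h1
      have h2 : G t x u₀ - u₀ = -(Winv (F t x u₀)) := by simp only [hGdef]; abel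
      have h3 : ‖υ t x - u₀‖ ≤ q * ‖υ t x - u₀‖ + ‖Winv‖ * ‖F t x u₀‖ := by
        calc ‖υ t x - u₀‖ = ‖(υ t x - G t x u₀) + (G t x u₀ - u₀)‖ := by congr 1; abel
          _ ≤ ‖υ t x - G t x u₀‖ + ‖G t x u₀ - u₀‖ := norm_add_le _ _
          _ ≤ q * ‖υ t x - u₀‖ + ‖Winv‖ * ‖F t x u₀‖ := by
              refine add_le_add h1 ?_
              rw [h2, norm_neg]; exact Winv.le_opNorm _
      rw [dist_eq_norm, div_mul_eq_mul_div, le_div_iff₀ h1q]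
      nlinarith [norm_nonneg (υ t x - u₀), norm_nonneg (F t x u₀)]
    have htend0 : Tendsto (fun p : ℝ × X => ‖F p.1 p.2 u₀‖) (𝓝[S] p₀) (𝓝 0) := by
      have h : Tendsto (fun p : ℝ × X => ‖F p.1 p.2 u₀‖) (𝓝[S] p₀)
          (𝓝 ‖F p₀.1 p₀.2 u₀‖) := hcomp.norm
      rw [hu₀z, norm_zero] at h
      exact h
    have htendC : Tendsto (fun p : ℝ × X => (‖Winv‖ / (1 - q)) * ‖F p.1 p.2 u₀‖)
        (𝓝[S] p₀) (𝓝 0) := by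
      have := htend0.const_mul (‖Winv‖ / (1 - q))
      simpa using this
    have hdist : Tendsto (fun p : ℝ × X => dist (υ p.1 p.2) u₀) (𝓝[S] p₀) (𝓝 0) := by
      refine squeeze_zero' (Filter.Eventually.of_forall fun _ => dist_nonneg) ?_ htendC
      exact Filter.eventually_of_mem self_mem_nhdsWithin hbound
    exact tendsto_iff_dist_tendsto_zero.2 hdist
  · -- Lipschitz in x
    refine ⟨‖Winv‖ * L₀ / (1 - q), by positivity, ?_⟩
    intro t ht htr x₁ hx₁ x₂ hx₂
    obtain ⟨hu₁b, hu₁z⟩ := hυfix t ht htr x₁ hx₁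
    obtain ⟨hu₂b, hu₂z⟩ := hυfix t ht htr x₂ hx₂
    obtain ⟨hu₁DY, hu₁ε, hu₁δ₀⟩ := hmemDY _ hu₁b
    obtain ⟨hu₂DY, hu₂ε, hu₂δ₀⟩ := hmemDY _ hu₂b
    have hfix₁ : G t x₁ (υ t x₁) = υ t x₁ := by simp [hGdef, hu₁z]
    have h1 : ‖G t x₁ (υ t x₁) - G t x₁ (υ t x₂)‖ ≤ q * ‖υ t x₁ - υ t x₂‖ :=
      hGcontr t ht htr x₁ hx₁ (υ t x₁) hu₁DY (υ t x₂) hu₂DY hu₁ε hu₂ε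
    rw [hfix₁] at h1
    have h2 : G t x₁ (υ t x₂) - υ t x₂ = -(Winv (F t x₁ (υ t x₂))) := by
      simp only [hGdef]; abel
    have hFlipb : ‖F t x₁ (υ t x₂) - F t x₂ (υ t x₂)‖ ≤ L₀ * (‖x₁ - x₂‖ + ‖υ t x₂ - υ t x₂‖) :=
      hlip t ht (lt_of_lt_of_le htr hrδ₀) x₁ (hxDX _ hx₁) x₂ (hxDX _ hx₂)
        (lt_of_lt_of_le hx₁ hrδ₀) (lt_of_lt_of_le hx₂ hrδ₀)
        (υ t x₂) hu₂DY (υ t x₂) hu₂DY hu₂δ₀ hu₂δ₀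
    rw [sub_self, norm_zero, add_zero] at hFlipb
    have h3 : ‖F t x₁ (υ t x₂)‖ ≤ L₀ * ‖x₁ - x₂‖ := by
      calc ‖F t x₁ (υ t x₂)‖ = ‖F t x₁ (υ t x₂) - F t x₂ (υ t x₂)‖ := by rw [hu₂z, sub_zero]
        _ ≤ L₀ * ‖x₁ - x₂‖ := hFlipb
    have h4 : ‖υ t x₁ - υ t x₂‖ ≤ q * ‖υ t x₁ - υ t x₂‖ + ‖Winv‖ * (L₀ * ‖x₁ - x₂‖) := by
      calc ‖υ t x₁ - υ t x₂‖
          = ‖(υ t x₁ - G t x₁ (υ t x₂)) + (G t x₁ (υ t x₂) - υ t x₂)‖ := by congr 1; abel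
        _ ≤ ‖υ t x₁ - G t x₁ (υ t x₂)‖ + ‖G t x₁ (υ t x₂) - υ t x₂‖ := norm_add_le _ _
        _ ≤ q * ‖υ t x₁ - υ t x₂‖ + ‖Winv‖ * (L₀ * ‖x₁ - x₂‖) := by
            refine add_le_add h1 ?_
            rw [h2, norm_neg]
            exact (Winv.le_opNorm _).trans (mul_le_mul_of_nonneg_left h3 (norm_nonneg _))
    rw [div_mul_eq_mul_div, le_div_iff₀ h1q]
    nlinarith [norm_nonneg (υ t x₁ - υ t x₂), norm_nonneg (x₁ - x₂), norm_nonneg Winv,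
      mul_nonneg hL₀ (norm_nonneg (x₁ - x₂))]
  · -- uniqueness
    intro t ht htr x hxr y hyρ hFy
    obtain ⟨hub, huz⟩ := hυfix t ht htr x hxr
    obtain ⟨huDY, huε, -⟩ := hmemDY _ hub
    have hyDY : y ∈ DY := hρDY (by simpa [Metric.mem_ball, dist_eq_norm] using hyρ)
    exact huniq t ht htr x hxr y hyDY (υ t x) huDY
      (lt_of_lt_of_le hyρ hρε) huε hFy huz
end

section
/- (Differential inequality along trajectories, min-version) Let W be a Banach space, D ⊆ W, H ∈ C(ℝ₊×D, W). Let V(w) = min_{i=1,…,m} V_i(w) with V_i ∈ C(W, ℝ₊) continuously differentiable on D, and let U ∈ C(ℝ₊), ψ : ℝ₊ → ℝ₊ locally integrable, such that ⟨H(t,w), grad V_{j(w)}(w)⟩ ≥ U(V(w)) ψ(t) for all w ∈ D, where j(w) is any index achieving the minimum. If w(t) solves ẇ = H(t,w) on [t₁,t₂] with w(t) ∈ D for all t, then V(w(t₂)) − V(w(t₁)) ≥ ∫_{t₁}^{t₂} U(V(w(τ))) ψ(τ) dτ. -/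
open Filter Topology MeasureTheory

private lemma tendsto_finset_inf'' {ι α : Type*} (A : Finset ι) (hA : A.Nonempty)
    (u : ι → α → ℝ) (d : ι → ℝ) (l : Filter α)
    (h : ∀ i ∈ A, Filter.Tendsto (u i) l (𝓝 (d i))) :
    Filter.Tendsto (fun s => A.inf' hA fun i => u i s) l (𝓝 (A.inf' hA d)) := by
  induction hA using Finset.Nonempty.cons_induction with
  | singleton i => simpa using h i (by simp)
  | cons i A hi hA ih =>
      rw [show (fun s => (Finset.cons i A hi).inf' (A.cons_nonempty hi) fun j => u j s)
            = fun s => min (u i s) (A.inf' hA fun j => u j s) from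
          funext fun s => by rw [Finset.inf'_cons hA],
        Finset.inf'_cons hA]
      exact (h i (by simp)).min (ih fun j hj => h j (Finset.mem_cons_of_mem hj))

private lemma finset_inf'_const_eq {ι : Type*} (A : Finset ι) (hA : A.Nonempty)
    {f : ι → ℝ} {c : ℝ} (hc : ∀ i ∈ A, f i = c) : A.inf' hA f = c := by
  refine le_antisymm ?_ (Finset.le_inf' hA f fun i hi => (hc i hi).ge)
  obtain ⟨i, hi, hieq⟩ := Finset.exists_mem_eq_inf' hA f
  rw [hieq, hc i hi]

private lemma hasDerivWithinAt_finset_inf'' {ι : Type*} (A : Finset ι) (hA : A.Nonempty)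
    (f : ι → ℝ → ℝ) (d : ι → ℝ) (x c : ℝ)
    (hf : ∀ i ∈ A, HasDerivAt (f i) (d i) x) (hc : ∀ i ∈ A, f i x = c) :
    HasDerivWithinAt (fun s => A.inf' hA fun i => f i s) (A.inf' hA d) (Set.Ioi x) x := by
  rw [hasDerivWithinAt_iff_tendsto_slope]
  have hxx : Set.Ioi x \ {x} = Set.Ioi x := Set.diff_singleton_eq_self (by simp)
  rw [hxx]
  have hFx : A.inf' hA (fun i => f i x) = c := finset_inf'_const_eq A hA hc
  have heq : ∀ᶠ s in 𝓝[>] x,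
      slope (fun s => A.inf' hA fun i => f i s) x s = A.inf' hA fun i => slope (f i) x s := by
    filter_upwards [self_mem_nhdsWithin] with s hs
    have hx : (0:ℝ) < s - x := sub_pos.2 hs
    have hmono : ∀ a b : ℝ, (fun y : ℝ => (y - c) / (s - x)) (a ⊓ b)
        = (fun y : ℝ => (y - c) / (s - x)) a ⊓ (fun y : ℝ => (y - c) / (s - x)) b := by
      intro a b
      have : Monotone (fun y : ℝ => (y - c) / (s - x)) := fun p q hpq => by
        dsimp; gcongr
      exact this.map_min
    calc slope (fun s => A.inf' hA fun i => f i s) x s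
        = ((A.inf' hA fun i => f i s) - c) / (s - x) := by rw [slope_def_field, hFx]
      _ = A.inf' hA ((fun y : ℝ => (y - c) / (s - x)) ∘ fun i => f i s) :=
          Finset.apply_inf'_eq_inf'_comp hA (f := fun i => f i s)
            (fun y : ℝ => (y - c) / (s - x)) hmono
      _ = A.inf' hA fun i => slope (f i) x s := by
          refine Finset.inf'_congr hA rfl fun i hi => ?_
          rw [Function.comp_apply, slope_def_field, hc i hi]
  refine Tendsto.congr' (Filter.EventuallyEq.symm heq) ?_
  refine tendsto_finset_inf'' A hA _ _ _ fun i hi => ?_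
  have := hasDerivAt_iff_tendsto_slope.1 (hf i hi)
  exact this.mono_left (nhdsWithin_mono x fun y hy => ne_of_gt hy)

/-- Differential inequality along trajectories (min-version): if
`V(w) = min_i V_i(w)` with `V_i ∈ C(W, ℝ₊)` continuously differentiable on `D`, and
`⟨H(t,w), grad V_{j(w)}(w)⟩ ≥ U(V(w)) ψ(t)` on `D` for any index `j(w)` achieving the
minimum, then along any solution `w` of `ẇ = H(t,w)` on `[t₁,t₂]` staying in `D`:
`V(w(t₂)) - V(w(t₁)) ≥ ∫_{t₁}^{t₂} U(V(w(τ))) ψ(τ) dτ`. -/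
theorem stmt_14
    {W : Type*} [NormedAddCommGroup W] [NormedSpace ℝ W] [CompleteSpace W]
    (D : Set W) (H : ℝ → W → W)
    (hHcont : ContinuousOn (fun p : ℝ × W => H p.1 p.2) (Set.Ici 0 ×ˢ D))
    (m : ℕ) (hm : 0 < m)
    (V : Fin m → W → ℝ)
    (hVcont : ∀ i, Continuous (V i)) (hVnonneg : ∀ i w, 0 ≤ V i w)
    (DV : Fin m → W → (W →L[ℝ] ℝ))
    (hDV : ∀ i, ∀ w ∈ D, HasFDerivAt (V i) (DV i w) w)
    (hDVcont : ∀ i, ContinuousOn (DV i) D)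
    (U : ℝ → ℝ) (hU : ContinuousOn U (Set.Ici 0))
    (ψ : ℝ → ℝ) (hψ : ∀ t, 0 ≤ ψ t)
    (hψint : ∀ a b : ℝ, IntervalIntegrable ψ volume a b)
    (hineq : ∀ t ∈ Set.Ici (0:ℝ), ∀ w ∈ D, ∀ i : Fin m,
        (∀ k, V i w ≤ V k w) → U (⨅ k, V k w) * ψ t ≤ DV i w (H t w))
    (t₁ t₂ : ℝ) (ht₁ : 0 ≤ t₁) (ht₁₂ : t₁ ≤ t₂)
    (w : ℝ → W)
    (hw : ∀ t ∈ Set.Icc t₁ t₂, HasDerivAt w (H t (w t)) t)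
    (hwD : ∀ t ∈ Set.Icc t₁ t₂, w t ∈ D) :
    ∫ τ in t₁..t₂, U (⨅ k, V k (w τ)) * ψ τ ≤ (⨅ k, V k (w t₂)) - (⨅ k, V k (w t₁)) := by
  classical
  have hne : (Finset.univ : Finset (Fin m)).Nonempty := ⟨⟨0, hm⟩, Finset.mem_univ _⟩
  -- rewrite iInf as Finset.inf'
  haveI : Nonempty (Fin m) := ⟨⟨0, hm⟩⟩
  have hiInf : ∀ f : Fin m → ℝ, (⨅ k, f k) = Finset.univ.inf' hne f := by
    intro f
    refine le_antisymm ?_ (le_ciInf fun i => Finset.inf'_le f (Finset.mem_univ i))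
    obtain ⟨i, -, hi⟩ := Finset.exists_mem_eq_inf' hne f
    rw [hi]
    exact ciInf_le (Set.Finite.bddBelow (Set.finite_range f)) i
  set g : ℝ → ℝ := fun s => Finset.univ.inf' hne fun k => V k (w s) with hgdef
  have hwc : ∀ t ∈ Set.Icc t₁ t₂, ContinuousAt w t := fun t ht => (hw t ht).continuousAt
  have hgc : ContinuousOn g (Set.Icc t₁ t₂) := by
    intro t ht
    refine ContinuousAt.continuousWithinAt ?_
    exact tendsto_finset_inf'' Finset.univ hne (fun k s => V k (w s)) (fun k => V k (w t))
      (𝓝 t) fun i _ => ((hVcont i).tendsto _).comp (hwc t ht)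
  have hgnn : ∀ s, 0 ≤ g s := fun s =>
    Finset.le_inf' hne _ fun i _ => hVnonneg i (w s)
  -- choice of minimizing index with minimal derivative value
  have hchoice : ∀ x : ℝ, ∃ i : Fin m, (∀ k, V i (w x) ≤ V k (w x)) ∧
      ∀ j : Fin m, (∀ k, V j (w x) ≤ V k (w x)) →
        DV i (w x) (H x (w x)) ≤ DV j (w x) (H x (w x)) := by
    intro x
    set A : Finset (Fin m) :=
      Finset.univ.filter (fun i : Fin m => ∀ k, V i (w x) ≤ V k (w x)) with hA
    have hAne : A.Nonempty := by
      obtain ⟨i, -, hi⟩ := Finset.exists_mem_eq_inf' hne (fun k => V k (w x))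
      refine ⟨i, Finset.mem_filter.2 ⟨Finset.mem_univ i, fun k => ?_⟩⟩
      rw [← hi]
      exact Finset.inf'_le _ (Finset.mem_univ k)
    obtain ⟨i, hiA, hmin⟩ :=
      Finset.exists_min_image A (fun j => DV j (w x) (H x (w x))) hAne
    exact ⟨i, (Finset.mem_filter.1 hiA).2, fun j hj =>
      hmin j (Finset.mem_filter.2 ⟨Finset.mem_univ j, hj⟩)⟩
  set ix : ℝ → Fin m := fun x => (hchoice x).choose with hixdef
  have hixmin : ∀ x, ∀ k, V (ix x) (w x) ≤ V k (w x) := fun x => (hchoice x).choose_spec.1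
  have hixder : ∀ x, ∀ j : Fin m, (∀ k, V j (w x) ≤ V k (w x)) →
      DV (ix x) (w x) (H x (w x)) ≤ DV j (w x) (H x (w x)) :=
    fun x => (hchoice x).choose_spec.2
  set g' : ℝ → ℝ := fun x => DV (ix x) (w x) (H x (w x)) with hg'def
  -- right derivative
  have hderiv : ∀ x ∈ Set.Ioo t₁ t₂, HasDerivWithinAt g (g' x) (Set.Ioi x) x := by
    intro x hx
    have hxIcc : x ∈ Set.Icc t₁ t₂ := ⟨hx.1.le, hx.2.le⟩
    have hxD : w x ∈ D := hwD x hxIcc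
    set A : Finset (Fin m) :=
      Finset.univ.filter (fun i : Fin m => ∀ k, V i (w x) ≤ V k (w x)) with hA
    have hAne : A.Nonempty :=
      ⟨ix x, Finset.mem_filter.2 ⟨Finset.mem_univ _, hixmin x⟩⟩
    have hcA : ∀ i ∈ A, V i (w x) = g x := by
      intro i hi
      refine le_antisymm ?_ (Finset.inf'_le _ (Finset.mem_univ i))
      exact Finset.le_inf' hne _ fun k _ => (Finset.mem_filter.1 hi).2 k
    -- derivative of each V i ∘ w
    have hder : ∀ i : Fin m,
        HasDerivAt (fun s => V i (w s)) (DV i (w x) (H x (w x))) x :=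
      fun i => (hDV i (w x) hxD).comp_hasDerivAt x (hw x hxIcc)
    -- eventual equality g = inf over A
    have hev : ∀ᶠ s in 𝓝 x, g s = A.inf' hAne fun i => V i (w s) := by
      have hstrict : ∀ᶠ s in 𝓝 x, ∀ k ∈ Finset.univ \ A,
          (A.inf' hAne fun i => V i (w s)) < V k (w s) := by
        rw [Filter.eventually_all_finset]
        intro k hk
        have hklt : (A.inf' hAne fun i => V i (w x)) < V k (w x) := by
          rw [finset_inf'_const_eq A hAne hcA]
          rcases lt_or_ge (g x) (V k (w x)) with h | h
          · exact h
          · exfalso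
            have : k ∈ A := Finset.mem_filter.2 ⟨Finset.mem_univ k, fun j =>
              le_trans h (Finset.inf'_le _ (Finset.mem_univ j))⟩
            exact (Finset.mem_sdiff.1 hk).2 this
        have hT : Filter.Tendsto
            (fun s => V k (w s) - A.inf' hAne fun i => V i (w s)) (𝓝 x)
            (𝓝 (V k (w x) - A.inf' hAne fun i => V i (w x))) := by
          refine Filter.Tendsto.sub (((hVcont k).tendsto _).comp (hwc x hxIcc)) ?_
          exact tendsto_finset_inf'' A hAne (fun i s => V i (w s)) (fun i => V i (w x))
            (𝓝 x) fun i _ => ((hVcont i).tendsto _).comp (hwc x hxIcc)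
        have h0 : (0:ℝ) < V k (w x) - A.inf' hAne fun i => V i (w x) :=
          sub_pos.2 hklt
        filter_upwards [hT.eventually (eventually_gt_nhds h0)] with s hs
        exact sub_pos.1 (lt_of_lt_of_le hs le_rfl)
      filter_upwards [hstrict] with s hs
      refine le_antisymm (Finset.le_inf' hAne _ fun i hi =>
        Finset.inf'_le _ (Finset.mem_univ i)) ?_
      refine Finset.le_inf' hne _ fun k _ => ?_
      by_cases hkA : k ∈ A
      · exact Finset.inf'_le _ hkA
      · exact (hs k (Finset.mem_sdiff.2 ⟨Finset.mem_univ k, hkA⟩)).le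
    -- derivative of the inf over A
    have h1 : HasDerivWithinAt (fun s => A.inf' hAne fun i => V i (w s))
        (A.inf' hAne fun i => DV i (w x) (H x (w x))) (Set.Ioi x) x :=
      hasDerivWithinAt_finset_inf'' A hAne (fun i s => V i (w s))
        (fun i => DV i (w x) (H x (w x))) x (g x) (fun i _ => hder i) hcA
    have hval : (A.inf' hAne fun i => DV i (w x) (H x (w x))) = g' x := by
      refine le_antisymm (Finset.inf'_le _ ?_)
        (Finset.le_inf' hAne _ fun j hj => hixder x j (Finset.mem_filter.1 hj).2)
      exact Finset.mem_filter.2 ⟨Finset.mem_univ _, hixmin x⟩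
    rw [← hval]
    refine h1.congr_of_eventuallyEq ?_ ?_
    · exact (hev.filter_mono nhdsWithin_le_nhds : _)
    · exact (finset_inf'_const_eq A hAne hcA).symm
  -- integrability of the integrand
  have hUg : ContinuousOn (fun τ => U (g τ)) (Set.Icc t₁ t₂) :=
    hU.comp hgc fun τ _ => hgnn τ
  have hψicc : IntegrableOn ψ (Set.Icc t₁ t₂) volume := by
    rw [← intervalIntegrable_iff_integrableOn_Icc_of_le ht₁₂]
    exact hψint t₁ t₂
  have φint : IntegrableOn (fun τ => U (g τ) * ψ τ) (Set.Icc t₁ t₂) volume := by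
    obtain ⟨C, hC⟩ := (isCompact_Icc).exists_bound_of_continuousOn hUg
    refine Integrable.bdd_mul (c := C) hψicc
      (hUg.aestronglyMeasurable measurableSet_Icc) ?_
    filter_upwards [ae_restrict_mem measurableSet_Icc] with τ hτ
    exact hC τ hτ
  -- pointwise inequality
  have hφg : ∀ x ∈ Set.Ioo t₁ t₂, U (g x) * ψ x ≤ g' x := by
    intro x hx
    have hxIcc : x ∈ Set.Icc t₁ t₂ := ⟨hx.1.le, hx.2.le⟩
    have := hineq x (le_trans ht₁ hx.1.le) (w x) (hwD x hxIcc) (ix x) (hixmin x)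
    rwa [hiInf (fun k => V k (w x))] at this
  have := intervalIntegral.integral_le_sub_of_hasDeriv_right_of_le ht₁₂ hgc hderiv φint hφg
  simp only [hgdef] at this
  calc ∫ τ in t₁..t₂, U (⨅ k, V k (w τ)) * ψ τ
      = ∫ τ in t₁..t₂, U (Finset.univ.inf' hne fun k => V k (w τ)) * ψ τ := by
        simp only [hiInf]
    _ ≤ _ := by
        rw [hiInf (fun k => V k (w t₂)), hiInf (fun k => V k (w t₁))]
        exact this
end

section
/- (Global existence, Lipschitz-Lyapunov version) Let W be a Banach space and Π̂ ∈ C(ℝ₊×W, W) locally Lipschitz in w with local existence for all initial data and the blow-up alternative. Suppose there exist R > 0, V ∈ C(W, ℝ₊) satisfying a (global) Lipschitz condition on {‖w‖ ≥ R} with V(w) → ∞ as ‖w‖ → ∞, and U ∈ C(ℝ₊), ψ : ℝ₊ → ℝ₊ locally integrable with ∫^∞ du/U(u) = ∞, such that ‖Π̂(t,w)‖ ≤ U(V(w)) ψ(t) for all t ≥ 0 and ‖w‖ ≥ R. Then every solution of ẇ = Π̂(t,w) is global. -/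
open Filter Topology MeasureTheory
open Set intervalIntegral

/-- Local-to-global: a continuous function on `[a,b]` that locally does not increase
to the right is bounded by its value at `a`. -/
lemma loc_to_glob {F : ℝ → ℝ} {a b : ℝ} (hab : a ≤ b)
    (hF : ContinuousOn F (Icc a b))
    (hloc : ∀ τ ∈ Ico a b, ∃ η > (0:ℝ), ∀ s ∈ Icc τ (min (τ + η) b), F s ≤ F τ) :
    ∀ t ∈ Icc a b, F t ≤ F a := by
  set S : Set ℝ := {s | s ∈ Icc a b ∧ ∀ u ∈ Icc a s, F u ≤ F a} with hS
  have haS : a ∈ S := ⟨⟨le_rfl, hab⟩, fun u hu => by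
    have : u = a := le_antisymm hu.2 hu.1
    simp [this]⟩
  have hbdd : BddAbove S := ⟨b, fun x hx => hx.1.2⟩
  have hne : S.Nonempty := ⟨a, haS⟩
  set c := sSup S with hc
  have hcS₁ : a ≤ c := le_csSup hbdd haS
  have hcb : c ≤ b := csSup_le hne fun x hx => hx.1.2
  have hlt : ∀ u ∈ Ico a c, F u ≤ F a := by
    intro u hu
    obtain ⟨s, hsS, hus⟩ := (lt_csSup_iff hbdd hne).mp hu.2
    exact hsS.2 u ⟨hu.1, hus.le⟩
  have hFc : F c ≤ F a := by
    rcases eq_or_lt_of_le hcS₁ with h | h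
    · simp [← h]
    · have htend : Tendsto F (𝓝[Ico a c] c) (𝓝 (F c)) :=
        (hF.continuousWithinAt ⟨hcS₁, hcb⟩).mono_left
          (nhdsWithin_mono _ (fun x hx => ⟨hx.1, hx.2.le.trans hcb⟩))
      have hne' : (𝓝[Ico a c] c).NeBot := by
        have : (𝓝[Ioo a c] c).NeBot := right_nhdsWithin_Ioo_neBot h
        exact this.mono (nhdsWithin_mono _ Ioo_subset_Ico_self)
      exact le_of_tendsto htend (eventually_nhdsWithin_of_forall hlt)
  have hcS : c ∈ S := ⟨⟨hcS₁, hcb⟩, fun u hu => by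
    rcases eq_or_lt_of_le hu.2 with h | h
    · rw [h]; exact hFc
    · exact hlt u ⟨hu.1, h⟩⟩
  have hcbeq : c = b := by
    by_contra hne'
    have hcltb : c < b := lt_of_le_of_ne hcb hne'
    obtain ⟨η, hη, hloc'⟩ := hloc c ⟨hcS₁, hcltb⟩
    have hmin : c < min (c + η) b := lt_min (by linarith) hcltb
    have : min (c + η) b ∈ S := by
      refine ⟨⟨hcS₁.trans hmin.le, min_le_right _ _⟩, fun u hu => ?_⟩
      rcases le_or_gt u c with h | h
      · exact hcS.2 u ⟨hu.1, h⟩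
      · exact (hloc' u ⟨h.le, hu.2⟩).trans hFc
    have := le_csSup hbdd this
    exact absurd this (not_le.mpr hmin)
  intro t ht
  rcases eq_or_lt_of_le ht.2 with h | h
  · rw [h, ← hcbeq]; exact hFc
  · exact hcS.2 t ⟨ht.1, by rw [hcbeq]; exact h.le⟩

/-- If `U` is negative at a value attained by `g`, and `g` satisfies the key integral
inequality, then `g` is constant. -/
lemma const_of_neg {U g φ : ℝ → ℝ} {a b τ₀ : ℝ}
    (hg : ContinuousOn g (Icc a b)) (hgpos : ∀ t ∈ Icc a b, 0 ≤ g t)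
    (hUc : ContinuousOn U (Ici 0))
    (hφ : ∀ t, 0 ≤ φ t)
    (key : ∀ s1 s2 : ℝ, a ≤ s1 → s1 ≤ s2 → s2 ≤ b →
      |g s2 - g s1| ≤ ∫ τ in s1..s2, U (g τ) * φ τ)
    (hτ₀ : τ₀ ∈ Icc a b) (hneg : U (g τ₀) < 0) :
    ∀ t ∈ Icc a b, g t = g τ₀ := by
  have hUg : ContinuousOn (fun t => U (g t)) (Icc a b) :=
    hUc.comp hg fun t ht => hgpos t ht
  -- local constancy around any point where `U (g ·) < 0`
  have hloc : ∀ τ ∈ Icc a b, U (g τ) < 0 → ∃ η > (0:ℝ),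
      (∀ s ∈ Icc a b, |s - τ| < η → g s = g τ) := by
    intro τ hτ hτneg
    have h1 : ∀ᶠ u in 𝓝[Icc a b] τ, U (g u) < 0 :=
      (hUg.continuousWithinAt hτ).eventually_lt_const hτneg
    obtain ⟨η, hη, h2⟩ := Metric.mem_nhdsWithin_iff.mp h1
    refine ⟨η, hη, fun s hs hsd => ?_⟩
    have hneg' : ∀ u, u ∈ Icc (min s τ) (max s τ) → U (g u) * φ u ≤ 0 := by
      intro u hu
      have hu' : u ∈ Icc a b := ⟨le_trans (le_min hs.1 hτ.1) hu.1,
        le_trans hu.2 (max_le hs.2 hτ.2)⟩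
      have hud : |u - τ| < η := by
        rw [abs_lt] at hsd ⊢
        rcases le_total s τ with h | h
        · simp [min_eq_left h, max_eq_right h] at hu
          constructor <;> nlinarith [hu.1, hu.2, hsd.1, hsd.2]
        · simp [min_eq_right h, max_eq_left h] at hu
          constructor <;> nlinarith [hu.1, hu.2, hsd.1, hsd.2]
      have : U (g u) < 0 := h2 ⟨by simpa [Real.dist_eq] using hud, hu'⟩
      exact mul_nonpos_of_nonpos_of_nonneg this.le (hφ u)
    rcases le_total τ s with h | h
    · have h3 := key τ s hτ.1 h hs.2
      have h4 : (∫ u in τ..s, U (g u) * φ u) ≤ 0 := by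
        rw [← neg_nonneg, ← intervalIntegral.integral_neg]
        refine intervalIntegral.integral_nonneg h fun u hu => ?_
        simp only [neg_nonneg]
        exact hneg' u (by rw [min_eq_right h, max_eq_left h]; exact hu)
      have : |g s - g τ| ≤ 0 := h3.trans h4
      have := abs_nonpos_iff.mp this
      linarith [sub_eq_zero.mp this]
    · have h3 := key s τ hs.1 h hτ.2
      have h4 : (∫ u in s..τ, U (g u) * φ u) ≤ 0 := by
        rw [← neg_nonneg, ← intervalIntegral.integral_neg]
        refine intervalIntegral.integral_nonneg h fun u hu => ?_
        simp only [neg_nonneg]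
        exact hneg' u (by rw [min_eq_left h, max_eq_right h]; exact hu)
      have : |g τ - g s| ≤ 0 := h3.trans h4
      have := abs_nonpos_iff.mp this
      linarith [sub_eq_zero.mp this]
  -- forward propagation
  have hfwd : ∀ t ∈ Icc τ₀ b, g t = g τ₀ := by
    set S : Set ℝ := {s | s ∈ Icc τ₀ b ∧ ∀ u ∈ Icc τ₀ s, g u = g τ₀} with hS
    have hτ₀S : τ₀ ∈ S := ⟨⟨le_rfl, hτ₀.2⟩, fun u hu => by
      have : u = τ₀ := le_antisymm hu.2 hu.1; rw [this]⟩
    have hbdd : BddAbove S := ⟨b, fun x hx => hx.1.2⟩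
    have hne : S.Nonempty := ⟨τ₀, hτ₀S⟩
    set β := sSup S with hβ
    have hβ₁ : τ₀ ≤ β := le_csSup hbdd hτ₀S
    have hβb : β ≤ b := csSup_le hne fun x hx => hx.1.2
    have hβmem : β ∈ Icc a b := ⟨hτ₀.1.trans hβ₁, hβb⟩
    have hlt : ∀ u ∈ Ico τ₀ β, g u = g τ₀ := by
      intro u hu
      obtain ⟨s, hsS, hus⟩ := (lt_csSup_iff hbdd hne).mp hu.2
      exact hsS.2 u ⟨hu.1, hus.le⟩
    have hgβ : g β = g τ₀ := by
      rcases eq_or_lt_of_le hβ₁ with h | h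
      · rw [← h]
      · have htend : Tendsto g (𝓝[Ico τ₀ β] β) (𝓝 (g β)) :=
          (hg.continuousWithinAt hβmem).mono_left
            (nhdsWithin_mono _ (fun x hx => ⟨hτ₀.1.trans hx.1, hx.2.le.trans hβb⟩))
        have hne' : (𝓝[Ico τ₀ β] β).NeBot :=
          (right_nhdsWithin_Ioo_neBot h).mono (nhdsWithin_mono _ Ioo_subset_Ico_self)
        exact tendsto_nhds_unique htend
          (Tendsto.congr' (eventually_nhdsWithin_of_forall fun u hu => (hlt u hu).symm)
            tendsto_const_nhds)
    have hβS : β ∈ S := ⟨⟨hβ₁, hβb⟩, fun u hu => by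
      rcases eq_or_lt_of_le hu.2 with h | h
      · rw [h]; exact hgβ
      · exact hlt u ⟨hu.1, h⟩⟩
    have hβeq : β = b := by
      by_contra hne''
      have hβltb : β < b := lt_of_le_of_ne hβb hne''
      obtain ⟨η, hη, hloc'⟩ := hloc β hβmem (by rw [hgβ]; exact hneg)
      have hmin : β < min (β + η/2) b := lt_min (by linarith) hβltb
      have : min (β + η/2) b ∈ S := by
        refine ⟨⟨hβ₁.trans hmin.le, min_le_right _ _⟩, fun u hu => ?_⟩
        rcases le_or_gt u β with h | h
        · exact hβS.2 u ⟨hu.1, h⟩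
        · have hub : u ≤ b := hu.2.trans (min_le_right _ _)
          have huβ : |u - β| < η := by
            have := hu.2.trans (min_le_left _ _)
            rw [abs_lt]; constructor <;> linarith
          rw [hloc' u ⟨hτ₀.1.trans (hβ₁.trans h.le), hub⟩ huβ]
          exact hgβ
      have := le_csSup hbdd this
      exact absurd this (not_le.mpr hmin)
    intro t ht
    exact hβS.2 t ⟨ht.1, by rw [hβeq]; exact ht.2⟩
  -- backward propagation
  have hbwd : ∀ t ∈ Icc a τ₀, g t = g τ₀ := by
    set S : Set ℝ := {s | s ∈ Icc a τ₀ ∧ ∀ u ∈ Icc s τ₀, g u = g τ₀} with hS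
    have hτ₀S : τ₀ ∈ S := ⟨⟨hτ₀.1, le_rfl⟩, fun u hu => by
      have : u = τ₀ := le_antisymm hu.2 hu.1; rw [this]⟩
    have hbdd : BddBelow S := ⟨a, fun x hx => hx.1.1⟩
    have hne : S.Nonempty := ⟨τ₀, hτ₀S⟩
    set β := sInf S with hβ
    have hβ₁ : β ≤ τ₀ := csInf_le hbdd hτ₀S
    have hβa : a ≤ β := le_csInf hne fun x hx => hx.1.1
    have hβmem : β ∈ Icc a b := ⟨hβa, hβ₁.trans hτ₀.2⟩
    have hlt : ∀ u ∈ Ioc β τ₀, g u = g τ₀ := by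
      intro u hu
      obtain ⟨s, hsS, hus⟩ := (csInf_lt_iff hbdd hne).mp hu.1
      exact hsS.2 u ⟨hus.le, hu.2⟩
    have hgβ : g β = g τ₀ := by
      rcases eq_or_lt_of_le hβ₁ with h | h
      · rw [h]
      · have htend : Tendsto g (𝓝[Ioc β τ₀] β) (𝓝 (g β)) :=
          (hg.continuousWithinAt hβmem).mono_left
            (nhdsWithin_mono _ (fun x hx => ⟨hβa.trans hx.1.le, hx.2.trans hτ₀.2⟩))
        have hne' : (𝓝[Ioc β τ₀] β).NeBot :=
          (left_nhdsWithin_Ioo_neBot h).mono (nhdsWithin_mono _ Ioo_subset_Ioc_self)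
        exact tendsto_nhds_unique htend
          (Tendsto.congr' (eventually_nhdsWithin_of_forall fun u hu => (hlt u hu).symm)
            tendsto_const_nhds)
    have hβS : β ∈ S := ⟨⟨hβa, hβ₁⟩, fun u hu => by
      rcases eq_or_lt_of_le hu.1 with h | h
      · rw [← h]; exact hgβ
      · exact hlt u ⟨h, hu.2⟩⟩
    have hβeq : β = a := by
      by_contra hne''
      have haltβ : a < β := lt_of_le_of_ne hβa (Ne.symm hne'')
      obtain ⟨η, hη, hloc'⟩ := hloc β hβmem (by rw [hgβ]; exact hneg)
      have hmax : max (β - η/2) a < β := max_lt (by linarith) haltβ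
      have : max (β - η/2) a ∈ S := by
        refine ⟨⟨le_max_right _ _, hmax.le.trans hβ₁⟩, fun u hu => ?_⟩
        rcases le_or_gt β u with h | h
        · exact hβS.2 u ⟨h, hu.2⟩
        · have hua : a ≤ u := (le_max_right _ _).trans hu.1
          have huβ : |u - β| < η := by
            have := (max_le_iff.mp (le_refl (max (β - η/2) a))).1.trans hu.1
            rw [abs_lt]; constructor <;> linarith
          rw [hloc' u ⟨hua, h.le.trans hβmem.2⟩ huβ]
          exact hgβ
      have := csInf_le hbdd this
      exact absurd this (not_le.mpr hmax)
    intro t ht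
    exact hβS.2 t ⟨by rw [hβeq]; exact ht.1, ht.2⟩
  intro t ht
  rcases le_total t τ₀ with h | h
  · exact hbwd t ⟨ht.1, h⟩
  · exact hfwd t ⟨h, ht.2⟩


lemma comparison_lemma {U g φ : ℝ → ℝ} {a b m M v₀ δ : ℝ}
    (hab : a ≤ b)
    (hg : ContinuousOn g (Icc a b))
    (hUc : ContinuousOn U (Ici 0))
    (hφ : ∀ t, 0 ≤ φ t) (hφint : ∀ s1 s2 : ℝ, IntervalIntegrable φ volume s1 s2)
    (hm : 0 ≤ m)
    (hrange : ∀ t ∈ Icc a b, g t ∈ Icc m M)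
    (hU0 : ∀ v ∈ Icc m M, 0 ≤ U v)
    (hv₀ : v₀ ∈ Icc m M)
    (hδ : 0 < δ)
    (key : ∀ s1 s2 : ℝ, a ≤ s1 → s1 ≤ s2 → s2 ≤ b →
      |g s2 - g s1| ≤ ∫ τ in s1..s2, U (g τ) * φ τ) :
    ∀ t ∈ Icc a b,
      (∫ u in v₀..(g t), (U u + δ)⁻¹) ≤ (∫ u in v₀..(g a), (U u + δ)⁻¹) + ∫ τ in a..t, φ τ := by
  have hMIcc : Icc m M ⊆ Ici 0 := fun v hv => hm.trans hv.1
  have hUδc : ContinuousOn (fun u => (U u + δ)⁻¹) (Icc m M) := by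
    refine ((hUc.mono hMIcc).add continuousOn_const).inv₀ fun v hv => ?_
    exact ne_of_gt (by simp only [Pi.add_apply]; linarith [hU0 v hv])
  have hIccsub : ∀ {x y : ℝ}, x ∈ Icc m M → y ∈ Icc m M → uIcc x y ⊆ Icc m M := by
    intro x y hx hy
    exact uIcc_subset_Icc hx hy
  have hUδint : ∀ {x y : ℝ}, x ∈ Icc m M → y ∈ Icc m M →
      IntervalIntegrable (fun u => (U u + δ)⁻¹) volume x y := by
    intro x y hx hy
    exact (hUδc.mono (hIccsub hx hy)).intervalIntegrable
  have hUδnn : ∀ v ∈ Icc m M, 0 ≤ (U v + δ)⁻¹ := fun v hv =>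
    inv_nonneg.mpr (by linarith [hU0 v hv])
  set G : ℝ → ℝ := fun v => ∫ u in v₀..v, (U u + δ)⁻¹ with hG
  -- `G` is Lipschitz on `Icc m M`
  have hGdiff : ∀ {x y : ℝ}, x ∈ Icc m M → y ∈ Icc m M →
      G y - G x = ∫ u in x..y, (U u + δ)⁻¹ := by
    intro x y hx hy
    rw [hG]
    have := integral_add_adjacent_intervals (hUδint hv₀ hx) (hUδint hx hy)
    simp only at this ⊢
    linarith
  have hGlip : ∀ {x y : ℝ}, x ∈ Icc m M → y ∈ Icc m M → |G y - G x| ≤ δ⁻¹ * |y - x| := by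
    intro x y hx hy
    rw [hGdiff hx hy]
    have := norm_integral_le_of_norm_le_const (a := x) (b := y) (C := δ⁻¹)
      (f := fun u => (U u + δ)⁻¹) ?_
    · simpa [Real.norm_eq_abs, abs_of_nonneg, mul_comm] using this
    · intro u hu
      have hu' : u ∈ Icc m M := hIccsub hx hy (uIoc_subset_uIcc hu)
      rw [Real.norm_eq_abs, abs_of_nonneg (hUδnn u hu')]
      rw [inv_le_inv₀ (by linarith [hU0 u hu']) hδ]
      linarith [hU0 u hu']
  have hGcont : ContinuousOn G (Icc m M) := by
    refine LipschitzOnWith.continuousOn (K := Real.toNNReal δ⁻¹) ?_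
    refine LipschitzOnWith.of_dist_le_mul fun x hx y hy => ?_
    rw [Real.dist_eq, Real.dist_eq]
    calc |G x - G y| ≤ δ⁻¹ * |x - y| := hGlip hy hx
      _ ≤ Real.toNNReal δ⁻¹ * |x - y| := by
          gcongr
          exact (Real.coe_toNNReal _ (inv_nonneg.mpr hδ.le)).ge
  have hGmono : ∀ {x y : ℝ}, x ∈ Icc m M → y ∈ Icc m M → x ≤ y → G x ≤ G y := by
    intro x y hx hy hxy
    have h1 : 0 ≤ ∫ u in x..y, (U u + δ)⁻¹ :=
      integral_nonneg hxy fun u hu => hUδnn u (hIccsub hx hy (by rwa [uIcc_of_le hxy]))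
    linarith [hGdiff hx hy]
  -- the function F
  set F : ℝ → ℝ := fun t => G (g t) - ∫ τ in a..t, φ τ with hF
  have hprim : ContinuousOn (fun t => ∫ τ in a..t, φ τ) (Icc a b) := by
    have := continuousOn_primitive_interval' (hφint a b) (a := a) (by simp [Set.left_mem_uIcc])
    rwa [uIcc_of_le hab] at this
  have hFcont : ContinuousOn F (Icc a b) :=
    (hGcont.comp hg fun t ht => hrange t ht).sub hprim
  -- integrability of the product
  have hUgc : ContinuousOn (fun t => U (g t)) (Icc a b) :=
    (hUc.mono hMIcc).comp hg fun t ht => hrange t ht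
  have hUgφint : ∀ {s1 s2 : ℝ}, a ≤ s1 → s2 ≤ b → s1 ≤ s2 →
      IntervalIntegrable (fun τ => U (g τ) * φ τ) volume s1 s2 := by
    intro s1 s2 h1 h2 h3
    refine (hφint s1 s2).continuousOn_mul (hUgc.mono ?_)
    rw [uIcc_of_le h3]
    exact Icc_subset_Icc h1 h2
  -- local decrease
  have hloc : ∀ τ ∈ Ico a b, ∃ η > (0:ℝ), ∀ s ∈ Icc τ (min (τ + η) b), F s ≤ F τ := by
    intro τ hτ
    have hτ' : τ ∈ Icc a b := ⟨hτ.1, hτ.2.le⟩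
    have hgτ : g τ ∈ Icc m M := hrange τ hτ'
    have hUτ : 0 ≤ U (g τ) := hU0 _ hgτ
    -- choose ρ by continuity of U at g τ
    have h1 : ∀ᶠ v in 𝓝[Icc m M] (g τ), |U v - U (g τ)| < δ/2 := by
      have := (hUc.mono hMIcc).continuousWithinAt hgτ
      have := this.eventually (Metric.ball_mem_nhds (U (g τ)) (by linarith : (0:ℝ) < δ/2))
      filter_upwards [this] with v hv
      simpa [Real.dist_eq] using hv
    obtain ⟨ρ, hρ, hρ2⟩ := Metric.mem_nhdsWithin_iff.mp h1
    -- choose η by continuity of g at τ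
    have h2 : ∀ᶠ s in 𝓝[Icc a b] τ, |g s - g τ| < ρ := by
      have := (hg.continuousWithinAt hτ').eventually
        (Metric.ball_mem_nhds (g τ) hρ)
      filter_upwards [this] with s hs
      simpa [Real.dist_eq] using hs
    obtain ⟨η, hη, hη2⟩ := Metric.mem_nhdsWithin_iff.mp h2
    refine ⟨η/2, by linarith, fun s hs => ?_⟩
    have hsb : s ∈ Icc a b := ⟨hτ.1.trans hs.1, hs.2.trans (min_le_right _ _)⟩
    have hsτ : τ ≤ s := hs.1
    have hgsub : ∀ u ∈ Icc τ s, |g u - g τ| < ρ := by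
      intro u hu
      have hub : u ∈ Icc a b := ⟨hτ.1.trans hu.1, hu.2.trans hsb.2⟩
      have : |u - τ| < η := by
        have h3 := hu.2.trans (hs.2.trans (min_le_left _ _))
        rw [abs_lt]; constructor <;> [linarith [hu.1]; linarith]
      exact hη2 ⟨by simpa [Real.dist_eq] using this, hub⟩
    have hφs : 0 ≤ ∫ τ' in τ..s, φ τ' := integral_nonneg hsτ fun u _ => hφ u
    have hprimdiff : (∫ τ' in a..s, φ τ') = (∫ τ' in a..τ, φ τ') + ∫ τ' in τ..s, φ τ' :=
      (integral_add_adjacent_intervals (hφint a τ) (hφint τ s)).symm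
    -- estimate (1)
    have hest1 : g s - g τ ≤ (U (g τ) + δ/2) * ∫ τ' in τ..s, φ τ' := by
      have hk := key τ s hτ.1 hsτ hsb.2
      have hmono : (∫ τ' in τ..s, U (g τ') * φ τ') ≤ ∫ τ' in τ..s, (U (g τ) + δ/2) * φ τ' := by
        refine integral_mono_on hsτ (hUgφint hτ.1 hsb.2 hsτ) ((hφint τ s).const_mul _) ?_
        intro u hu
        have := hgsub u hu
        have hu' : u ∈ Icc a b := ⟨hτ.1.trans hu.1, hu.2.trans hsb.2⟩
        have hUu : U (g u) ≤ U (g τ) + δ/2 := by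
          have h5 := hρ2 ⟨by simpa [Real.dist_eq] using this, hrange u hu'⟩
          simp only [Set.mem_setOf_eq, abs_lt] at h5
          linarith [h5.2]
        exact mul_le_mul_of_nonneg_right hUu (hφ u)
      rw [intervalIntegral.integral_const_mul] at hmono
      calc g s - g τ ≤ |g s - g τ| := le_abs_self _
        _ ≤ _ := hk.trans hmono
    rcases le_or_gt (g s) (g τ) with hcase | hcase
    · -- g decreases: both terms move the right way
      have : G (g s) ≤ G (g τ) := hGmono (hrange s hsb) hgτ hcase
      simp only [hF]
      rw [hprimdiff]
      linarith
    · -- g increases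
      have hgs : g s ∈ Icc m M := hrange s hsb
      have hGstep : G (g s) - G (g τ) ≤ (U (g τ) + δ/2)⁻¹ * (g s - g τ) := by
        rw [hGdiff hgτ hgs]
        have hmono : (∫ u in (g τ)..(g s), (U u + δ)⁻¹) ≤
            ∫ u in (g τ)..(g s), (U (g τ) + δ/2)⁻¹ := by
          refine integral_mono_on hcase.le (hUδint hgτ hgs)
            (intervalIntegrable_const) ?_
          intro v hv
          have hvM : v ∈ Icc m M := hIccsub hgτ hgs (by rwa [uIcc_of_le hcase.le])
          have hvρ : |v - g τ| < ρ := by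
            have h6 := hgsub s ⟨hsτ, le_rfl⟩
            rw [abs_lt] at h6 ⊢
            constructor <;> [linarith [hv.1]; linarith [hv.2]]
          have h5 := hρ2 ⟨by simpa [Real.dist_eq] using hvρ, hvM⟩
          simp only [Set.mem_setOf_eq, abs_lt] at h5
          rw [inv_le_inv₀ (by linarith [hU0 v hvM]) (by linarith)]
          linarith [h5.1]
        rw [intervalIntegral.integral_const] at hmono
        calc (∫ u in (g τ)..(g s), (U u + δ)⁻¹) ≤ (g s - g τ) • (U (g τ) + δ/2)⁻¹ := hmono
          _ = (U (g τ) + δ/2)⁻¹ * (g s - g τ) := by rw [smul_eq_mul]; ring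
      have hpos : (0:ℝ) < U (g τ) + δ/2 := by linarith
      have : G (g s) - G (g τ) ≤ ∫ τ' in τ..s, φ τ' := by
        calc G (g s) - G (g τ) ≤ (U (g τ) + δ/2)⁻¹ * (g s - g τ) := hGstep
          _ ≤ (U (g τ) + δ/2)⁻¹ * ((U (g τ) + δ/2) * ∫ τ' in τ..s, φ τ') := by
              exact mul_le_mul_of_nonneg_left hest1 (inv_nonneg.mpr hpos.le)
          _ = ∫ τ' in τ..s, φ τ' := by
              rw [← mul_assoc, inv_mul_cancel₀ (ne_of_gt hpos), one_mul]
      simp only [hF]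
      rw [hprimdiff]
      linarith
  -- conclude via the local-to-global lemma
  have := loc_to_glob hab hFcont hloc
  intro t ht
  have h7 := this t ht
  simp only [hF] at h7
  rw [intervalIntegral.integral_same] at h7
  linarith


lemma mct_lemma {U : ℝ → ℝ} {v₀ B Φ : ℝ}
    (hv₀ : 0 < v₀) (hv₀B : v₀ ≤ B) (hΦ : 0 ≤ Φ)
    (hUc : ContinuousOn U (Ici 0))
    (hU0 : ∀ v ∈ Icc v₀ B, 0 ≤ U v)
    (hint : IntervalIntegrable (fun u => (U u)⁻¹) volume v₀ B)
    (hδ : ∀ δ > (0:ℝ), (∫ u in v₀..B, (U u + δ)⁻¹) ≤ Φ) :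
    (∫ u in v₀..B, (U u)⁻¹) ≤ Φ := by
  have hIccIci : Icc v₀ B ⊆ Ici 0 := fun v hv => hv₀.le.trans hv.1
  set f : ℕ → ℝ → ℝ := fun n u => (U u + ((n:ℝ) + 1)⁻¹)⁻¹ with hf
  have hδn : ∀ n : ℕ, (0:ℝ) < ((n:ℝ) + 1)⁻¹ := fun n =>
    inv_pos.mpr (by positivity)
  have hfc : ∀ n, ContinuousOn (f n) (Icc v₀ B) := by
    intro n
    refine ((hUc.mono hIccIci).add continuousOn_const).inv₀ fun v hv => ?_
    have := hU0 v hv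
    simp only [Pi.add_apply]; positivity
  have hfint : ∀ n, IntegrableOn (f n) (Ioc v₀ B) volume :=
    fun n => ((hfc n).integrableOn_Icc).mono_set Ioc_subset_Icc_self
  set F : ℕ → ℝ → ENNReal := fun n u => ENNReal.ofReal (f n u) with hF
  have hmeas : ∀ n, AEMeasurable (F n) (volume.restrict (Ioc v₀ B)) := by
    intro n
    exact ENNReal.measurable_ofReal.comp_aemeasurable
      (((hfc n).mono Ioc_subset_Icc_self).aemeasurable measurableSet_Ioc)
  have hmono : ∀ u ∈ Ioc v₀ B, Monotone fun n => F n u := by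
    intro u hu
    intro i j hij
    have hu' : u ∈ Icc v₀ B := Ioc_subset_Icc_self hu
    have hU := hU0 u hu'
    refine ENNReal.ofReal_le_ofReal ?_
    have h1 : ((j:ℝ) + 1)⁻¹ ≤ ((i:ℝ) + 1)⁻¹ := by
      rw [inv_le_inv₀ (by positivity) (by positivity)]
      exact_mod_cast by linarith [(Nat.cast_le (α := ℝ)).mpr hij]
    rw [inv_le_inv₀ (by positivity) (by positivity)]
    linarith
  -- each F n has lintegral at most ofReal Φ
  have hFn : ∀ n, (∫⁻ u in Ioc v₀ B, F n u) ≤ ENNReal.ofReal Φ := by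
    intro n
    have hnn : 0 ≤ᵐ[volume.restrict (Ioc v₀ B)] f n := by
      refine (ae_restrict_iff' measurableSet_Ioc).mpr (Eventually.of_forall ?_)
      intro u hu
      have := hU0 u (Ioc_subset_Icc_self hu)
      have := (hδn n)
      positivity
    have h2 : ENNReal.ofReal (∫ u in Ioc v₀ B, f n u) = ∫⁻ u in Ioc v₀ B, F n u :=
      ofReal_integral_eq_lintegral_ofReal (hfint n) hnn
    rw [← h2]
    refine ENNReal.ofReal_le_ofReal ?_
    have := hδ (((n:ℝ) + 1)⁻¹) (hδn n)
    rwa [intervalIntegral.integral_of_le hv₀B] at this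
  -- pointwise: ofReal (U u)⁻¹ ≤ ⨆ n, F n u
  have hpt : ∀ u ∈ Ioc v₀ B, ENNReal.ofReal ((U u)⁻¹) ≤ ⨆ n, F n u := by
    intro u hu
    have hu' : u ∈ Icc v₀ B := Ioc_subset_Icc_self hu
    rcases eq_or_lt_of_le (hU0 u hu') with h | h
    · rw [← h]
      simp
    · have htend : Tendsto (fun n : ℕ => F n u) atTop (𝓝 (ENNReal.ofReal ((U u)⁻¹))) := by
        refine (ENNReal.continuous_ofReal.tendsto _).comp ?_
        have h0 : Tendsto (fun n : ℕ => ((n:ℝ) + 1)⁻¹) atTop (𝓝 0) := by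
          simpa [one_div] using tendsto_one_div_add_atTop_nhds_zero_nat (𝕜 := ℝ)
        have := (tendsto_const_nhds (x := U u) (f := atTop (α := ℕ))).add h0
        rw [add_zero] at this
        exact this.inv₀ (ne_of_gt h)
      have := tendsto_nhds_unique htend (tendsto_atTop_iSup (hmono u hu))
      rw [this]
  have hint' : IntegrableOn (fun u => (U u)⁻¹) (Ioc v₀ B) volume := by
    rw [← intervalIntegrable_iff_integrableOn_Ioc_of_le hv₀B]
    exact hint
  have hnn' : 0 ≤ᵐ[volume.restrict (Ioc v₀ B)] fun u => (U u)⁻¹ := by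
    refine (ae_restrict_iff' measurableSet_Ioc).mpr (Eventually.of_forall ?_)
    intro u hu
    exact inv_nonneg.mpr (hU0 u (Ioc_subset_Icc_self hu))
  have hkey : ENNReal.ofReal (∫ u in Ioc v₀ B, (U u)⁻¹) ≤ ENNReal.ofReal Φ := by
    rw [ofReal_integral_eq_lintegral_ofReal hint' hnn']
    calc (∫⁻ u in Ioc v₀ B, ENNReal.ofReal ((U u)⁻¹))
        ≤ ∫⁻ u in Ioc v₀ B, ⨆ n, F n u := by
          refine lintegral_mono_ae ((ae_restrict_iff' measurableSet_Ioc).mpr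
            (Eventually.of_forall fun u hu => hpt u hu))
      _ = ⨆ n, ∫⁻ u in Ioc v₀ B, F n u := by
          refine lintegral_iSup' hmeas ((ae_restrict_iff' measurableSet_Ioc).mpr
            (Eventually.of_forall fun u hu => hmono u hu))
      _ ≤ ENNReal.ofReal Φ := iSup_le hFn
  rw [intervalIntegral.integral_of_le hv₀B]
  exact (ENNReal.ofReal_le_ofReal_iff hΦ).mp hkey


lemma apriori_bound
    {W : Type*} [NormedAddCommGroup W] [NormedSpace ℝ W] [CompleteSpace W]
    (Phat : ℝ → W → W)
    (hcont : ContinuousOn (fun p : ℝ × W => Phat p.1 p.2) (Set.Ici 0 ×ˢ Set.univ))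
    (R : ℝ) (hR : 0 < R)
    (V : W → ℝ) (hVcont : Continuous V) (hVnonneg : ∀ w, 0 ≤ V w)
    (hVlip : ∃ l ≥ (0:ℝ), ∀ w₁ w₂ : W, R ≤ ‖w₁‖ → R ≤ ‖w₂‖ →
        |V w₁ - V w₂| ≤ l * ‖w₁ - w₂‖)
    (hVinf : ∀ c : ℝ, ∃ ρ : ℝ, ∀ w : W, ρ ≤ ‖w‖ → c ≤ V w)
    (U : ℝ → ℝ) (hU : ContinuousOn U (Set.Ici 0))
    (ψ : ℝ → ℝ) (hψ : ∀ t, 0 ≤ ψ t)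
    (hψint : ∀ a b : ℝ, IntervalIntegrable ψ volume a b)
    (hUdiv : ∀ u₀ > (0:ℝ),
        Tendsto (fun b => ∫ u in u₀..b, (U u)⁻¹) atTop atTop)
    (hineq : ∀ t ∈ Set.Ici (0:ℝ), ∀ w : W, R ≤ ‖w‖ → ‖Phat t w‖ ≤ U (V w) * ψ t)
    {t₀ T : ℝ} (ht₀ : 0 ≤ t₀) (hT : t₀ < T)
    {w : ℝ → W}
    (hderiv : ∀ t ∈ Set.Ico t₀ T, HasDerivAt w (Phat t (w t)) t) :
    ∃ M : ℝ, ∀ t ∈ Set.Ico t₀ T, ‖w t‖ ≤ M := by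
  classical
  by_cases hzero : ∀ u : W, u = 0
  · exact ⟨R, fun t _ => by rw [hzero (w t)]; simpa using hR.le⟩
  push_neg at hzero
  obtain ⟨u, hu⟩ := hzero
  obtain ⟨l, hl, hlip⟩ := hVlip
  have hwc : ContinuousOn w (Set.Ico t₀ T) :=
    fun t ht => (hderiv t ht).continuousAt.continuousWithinAt
  have hPc : ContinuousOn (fun τ => Phat τ (w τ)) (Set.Ico t₀ T) := by
    refine hcont.comp (continuousOn_id.prodMk hwc) ?_
    exact fun τ hτ => ⟨ht₀.trans hτ.1, trivial⟩
  have hFTC : ∀ s1 s2 : ℝ, s1 ∈ Set.Ico t₀ T → s2 ∈ Set.Ico t₀ T → s1 ≤ s2 →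
      w s2 - w s1 = ∫ τ in s1..s2, Phat τ (w τ) := by
    intro s1 s2 h1 h2 h12
    refine (integral_eq_sub_of_hasDerivAt ?_ ?_).symm
    · intro x hx
      rw [uIcc_of_le h12] at hx
      exact hderiv x ⟨h1.1.trans hx.1, lt_of_le_of_lt hx.2 h2.2⟩
    · refine (hPc.mono ?_).intervalIntegrable
      rw [uIcc_of_le h12]
      exact fun x hx => ⟨h1.1.trans hx.1, lt_of_le_of_lt hx.2 h2.2⟩
  -- reference point on the sphere of radius R
  set uR : W := (R / ‖u‖) • u with huR
  have hunorm : (0:ℝ) < ‖u‖ := norm_pos_iff.mpr hu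
  have huRnorm : ‖uR‖ = R := by
    rw [huR, norm_smul, Real.norm_eq_abs, abs_div, abs_of_pos hR, abs_of_pos hunorm]
    field_simp
  have hsphere : ∀ x : W, ‖x‖ = R → V x ≤ V uR + l * (2 * R) := by
    intro x hx
    have h1 := hlip x uR (le_of_eq hx.symm) (le_of_eq huRnorm.symm)
    have h2 : ‖x - uR‖ ≤ 2 * R := by
      calc ‖x - uR‖ ≤ ‖x‖ + ‖uR‖ := norm_sub_le _ _
        _ = 2 * R := by rw [hx, huRnorm]; ring
    have h3 : l * ‖x - uR‖ ≤ l * (2 * R) := mul_le_mul_of_nonneg_left h2 hl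
    have := (abs_le.mp (h1.trans h3)).1
    linarith [(abs_le.mp (h1.trans h3)).2]
  set v₀ : ℝ := max (V (w t₀)) (V uR + l * (2 * R)) + 1 with hv₀
  have hv₀pos : 0 < v₀ := by
    have := hVnonneg (w t₀)
    have h2 : V (w t₀) ≤ max (V (w t₀)) (V uR + l * (2 * R)) := le_max_left _ _
    rw [hv₀]; linarith
  set Φm : ℝ := l * ∫ τ in t₀..T, ψ τ with hΦm
  have hΦmnn : 0 ≤ Φm :=
    mul_nonneg hl (integral_nonneg hT.le fun τ _ => hψ τ)
  -- choose B
  obtain ⟨B, hB2, hB1⟩ :=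
    (((hUdiv v₀ hv₀pos).eventually_gt_atTop Φm).and (eventually_ge_atTop (v₀ + 1))).exists
  -- integrability of (U ·)⁻¹ on [v₀, B]
  have hB0 : v₀ ≤ B := by linarith
  have h_int : IntervalIntegrable (fun u => (U u)⁻¹) volume v₀ B := by
    by_contra hni
    have h0 : ∀ᶠ b in atTop, (∫ u in v₀..b, (U u)⁻¹) = 0 := by
      filter_upwards [eventually_ge_atTop B] with b hb
      refine integral_undef fun hii => hni ?_
      refine hii.mono_set ?_
      rw [uIcc_of_le hB0, uIcc_of_le (hB0.trans hb)]
      exact Set.Icc_subset_Icc le_rfl hb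
    have h1 := ((hUdiv v₀ hv₀pos).eventually_gt_atTop 0).and h0
    obtain ⟨b, hb1, hb2⟩ := h1.exists
    rw [hb2] at hb1
    exact lt_irrefl 0 hb1
  -- choose ρ from properness of V
  obtain ⟨ρ, hρ⟩ := hVinf B
  refine ⟨max ρ R, fun tstar htstar => ?_⟩
  by_contra hcon
  push_neg at hcon
  have hRt : R ≤ ‖w tstar‖ := le_of_lt (lt_of_le_of_lt (le_max_right _ _) hcon)
  have hBt : B ≤ V (w tstar) := hρ _ (le_of_lt (lt_of_le_of_lt (le_max_left _ _) hcon))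
  -- find the entry time a
  have hIccIco : Set.Icc t₀ tstar ⊆ Set.Ico t₀ T :=
    fun s hs => ⟨hs.1, lt_of_le_of_lt hs.2 htstar.2⟩
  have hmain : ∃ a ∈ Set.Icc t₀ tstar, (∀ s ∈ Set.Icc a tstar, R ≤ ‖w s‖) ∧
      V (w a) ≤ v₀ - 1 := by
    set D : Set ℝ := {s | s ∈ Set.Icc t₀ tstar ∧ ‖w s‖ < R} with hD
    by_cases hDe : D.Nonempty
    · set a := sSup D with ha
      have hbdd : BddAbove D := ⟨tstar, fun x hx => hx.1.2⟩
      have haD : a ∈ Set.Icc t₀ tstar := by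
        constructor
        · obtain ⟨d, hd⟩ := hDe
          exact hd.1.1.trans (le_csSup hbdd hd)
        · exact csSup_le hDe fun x hx => hx.1.2
      have hup : ∀ s ∈ Set.Ioc a tstar, R ≤ ‖w s‖ := by
        intro s hs
        by_contra hcon2
        push_neg at hcon2
        have : s ∈ D := ⟨⟨haD.1.trans hs.1.le, hs.2⟩, hcon2⟩
        exact absurd (le_csSup hbdd this) (not_le.mpr hs.1)
      have hwa_le : ‖w a‖ ≤ R := by
        by_contra hcon2
        push_neg at hcon2
        have hcw : ContinuousWithinAt (fun s => ‖w s‖) (Set.Icc t₀ tstar) a :=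
          ((hwc.mono hIccIco).norm).continuousWithinAt haD
        have hev : ∀ᶠ s in 𝓝[Set.Icc t₀ tstar] a, R < ‖w s‖ :=
          hcw.eventually_const_lt hcon2
        obtain ⟨δ, hδ, hδ2⟩ := Metric.mem_nhdsWithin_iff.mp hev
        obtain ⟨d, hdD, hda⟩ := (lt_csSup_iff hbdd hDe).mp
          (show a - δ/2 < a by linarith)
        have hdd : d ∈ Metric.ball a δ ∩ Set.Icc t₀ tstar := by
          constructor
          · rw [Metric.mem_ball, Real.dist_eq, abs_lt]
            have := le_csSup hbdd hdD
            constructor <;> linarith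
          · exact hdD.1
        exact absurd hdD.2 (not_lt.mpr (hδ2 hdd).le)
      have hwa_ge : R ≤ ‖w a‖ := by
        by_contra hcon2
        push_neg at hcon2
        have hane : a ≠ tstar := by
          intro h
          rw [h] at hcon2
          exact absurd hRt (not_le.mpr hcon2)
        have halt : a < tstar := lt_of_le_of_ne haD.2 hane
        have hcw : ContinuousWithinAt (fun s => ‖w s‖) (Set.Icc t₀ tstar) a :=
          ((hwc.mono hIccIco).norm).continuousWithinAt haD
        have hev : ∀ᶠ s in 𝓝[Set.Icc t₀ tstar] a, ‖w s‖ < R :=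
          hcw.eventually_lt_const hcon2
        obtain ⟨δ, hδ, hδ2⟩ := Metric.mem_nhdsWithin_iff.mp hev
        set s := min (a + δ/2) tstar with hsdef
        have hs1 : a < s := lt_min (by linarith) halt
        have hs2 : s ∈ Set.Icc t₀ tstar := ⟨haD.1.trans hs1.le, min_le_right _ _⟩
        have hs3 : s ∈ Metric.ball a δ := by
          rw [Metric.mem_ball, Real.dist_eq, abs_lt]
          have : s ≤ a + δ/2 := min_le_left _ _
          constructor <;> linarith
        have : s ∈ D := ⟨hs2, hδ2 ⟨hs3, hs2⟩⟩
        exact absurd (le_csSup hbdd this) (not_le.mpr hs1)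
      have hwaR : ‖w a‖ = R := le_antisymm hwa_le hwa_ge
      refine ⟨a, haD, fun s hs => ?_, ?_⟩
      · rcases eq_or_lt_of_le hs.1 with h | h
        · rw [← h, hwaR]
        · exact hup s ⟨h, hs.2⟩
      · have := hsphere (w a) hwaR
        have h2 : V uR + l * (2*R) ≤ max (V (w t₀)) (V uR + l * (2 * R)) := le_max_right _ _
        rw [hv₀]; linarith
    · refine ⟨t₀, ⟨le_rfl, htstar.1⟩, fun s hs => ?_, ?_⟩
      · by_contra hc
        push_neg at hc
        exact hDe ⟨s, hs, hc⟩
      · have h2 : V (w t₀) ≤ max (V (w t₀)) (V uR + l * (2 * R)) := le_max_left _ _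
        rw [hv₀]; linarith
  obtain ⟨a, haI, hanorm, hVa⟩ := hmain
  set g : ℝ → ℝ := fun t => V (w t) with hgdef
  set φ : ℝ → ℝ := fun τ => l * ψ τ with hφdef
  have hφnn : ∀ τ, 0 ≤ φ τ := fun τ => mul_nonneg hl (hψ τ)
  have hφint : ∀ s1 s2 : ℝ, IntervalIntegrable φ volume s1 s2 :=
    fun s1 s2 => (hψint s1 s2).const_mul l
  have hat : a ≤ tstar := haI.2
  have hIccsub : Set.Icc a tstar ⊆ Set.Ico t₀ T :=
    fun s hs => hIccIco ⟨haI.1.trans hs.1, hs.2⟩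
  have hgc : ContinuousOn g (Set.Icc a tstar) :=
    hVcont.comp_continuousOn (hwc.mono hIccsub)
  have hgnn : ∀ t ∈ Set.Icc a tstar, 0 ≤ g t := fun t _ => hVnonneg _
  have hUgc : ContinuousOn (fun τ => U (g τ)) (Set.Icc a tstar) :=
    hU.comp hgc fun t _ => hVnonneg _
  have key : ∀ s1 s2 : ℝ, a ≤ s1 → s1 ≤ s2 → s2 ≤ tstar →
      |g s2 - g s1| ≤ ∫ τ in s1..s2, U (g τ) * φ τ := by
    intro s1 s2 h1 h2 h3
    have hs1 : s1 ∈ Set.Icc a tstar := ⟨h1, h2.trans h3⟩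
    have hs2 : s2 ∈ Set.Icc a tstar := ⟨h1.trans h2, h3⟩
    have hsub : Set.Icc s1 s2 ⊆ Set.Icc a tstar := Set.Icc_subset_Icc h1 h3
    have e1 : |g s2 - g s1| ≤ l * ‖w s2 - w s1‖ :=
      hlip _ _ (hanorm s2 hs2) (hanorm s1 hs1)
    have e2 : w s2 - w s1 = ∫ τ in s1..s2, Phat τ (w τ) :=
      hFTC s1 s2 (hIccsub hs1) (hIccsub hs2) h2
    have e3 : ‖∫ τ in s1..s2, Phat τ (w τ)‖ ≤ ∫ τ in s1..s2, ‖Phat τ (w τ)‖ :=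
      intervalIntegral.norm_integral_le_integral_norm h2
    have e4 : (∫ τ in s1..s2, ‖Phat τ (w τ)‖) ≤ ∫ τ in s1..s2, U (g τ) * ψ τ := by
      refine integral_mono_on h2 ?_ ?_ ?_
      · refine ((hPc.mono (hsub.trans hIccsub |> fun h => ?_)).norm).intervalIntegrable
        · rw [uIcc_of_le h2]
          exact fun x hx => hIccsub (hsub hx)
      · refine (hψint s1 s2).continuousOn_mul (hUgc.mono ?_)
        rw [uIcc_of_le h2]; exact hsub
      · intro τ hτ
        exact hineq τ (ht₀.trans (hIccsub (hsub hτ)).1) (w τ) (hanorm τ (hsub hτ))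
    have e5 : l * ∫ τ in s1..s2, U (g τ) * ψ τ = ∫ τ in s1..s2, U (g τ) * φ τ := by
      rw [← intervalIntegral.integral_const_mul]
      refine integral_congr fun τ _ => ?_
      simp only [hφdef]; ring
    calc |g s2 - g s1| ≤ l * ‖w s2 - w s1‖ := e1
      _ = l * ‖∫ τ in s1..s2, Phat τ (w τ)‖ := by rw [e2]
      _ ≤ l * ∫ τ in s1..s2, ‖Phat τ (w τ)‖ := mul_le_mul_of_nonneg_left e3 hl
      _ ≤ l * ∫ τ in s1..s2, U (g τ) * ψ τ := mul_le_mul_of_nonneg_left e4 hl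
      _ = _ := e5
  obtain ⟨tmin, htminI, htmin⟩ := isCompact_Icc.exists_isMinOn
    (Set.nonempty_Icc.mpr hat) hgc
  obtain ⟨tmax, htmaxI, htmax⟩ := isCompact_Icc.exists_isMaxOn
    (Set.nonempty_Icc.mpr hat) hgc
  set m := g tmin with hm
  set M' := g tmax with hM'
  have hrange : ∀ t ∈ Set.Icc a tstar, g t ∈ Set.Icc m M' :=
    fun t ht => ⟨isMinOn_iff.mp htmin t ht, isMaxOn_iff.mp htmax t ht⟩
  have haI' : a ∈ Set.Icc a tstar := Set.left_mem_Icc.mpr hat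
  have htsI' : tstar ∈ Set.Icc a tstar := Set.right_mem_Icc.mpr hat
  have hga : g a ≤ v₀ - 1 := hVa
  have hgt : B ≤ g tstar := hBt
  have hU0 : ∀ v ∈ Set.Icc m M', 0 ≤ U v := by
    intro v hv
    by_contra hneg
    push_neg at hneg
    have hIVT : v ∈ g '' uIcc tmin tmax := by
      refine intermediate_value_uIcc (hgc.mono (uIcc_subset_Icc htminI htmaxI)) ?_
      rw [uIcc_of_le (isMinOn_iff.mp htmin tmax htmaxI)]
      exact hv
    obtain ⟨τv, hτv, hgτv⟩ := hIVT
    have hτv' : τv ∈ Set.Icc a tstar := uIcc_subset_Icc htminI htmaxI hτv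
    have hconst := const_of_neg hgc hgnn hU hφnn key hτv' (by rw [hgτv]; exact hneg)
    have h1 := hconst a haI'
    have h2 := hconst tstar htsI'
    rw [h1] at hga
    rw [h2] at hgt
    linarith
  have hgtM : g tstar ≤ M' := (hrange tstar htsI').2
  have hmga : m ≤ g a := (hrange a haI').1
  have hv₀mem : v₀ ∈ Set.Icc m M' :=
    ⟨hmga.trans (by linarith), by linarith⟩
  have hBmem : B ∈ Set.Icc m M' := ⟨hv₀mem.1.trans hB0, hgt.trans hgtM⟩
  have hmnn : 0 ≤ m := hVnonneg _
  have hU0' : ∀ v ∈ Set.Icc v₀ B, 0 ≤ U v :=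
    fun v hv => hU0 v ⟨hv₀mem.1.trans hv.1, hv.2.trans hBmem.2⟩
  have hδbound : ∀ δ > (0:ℝ), (∫ u in v₀..B, (U u + δ)⁻¹) ≤ Φm := by
    intro δ hδ
    have hcomp := comparison_lemma hat hgc hU hφnn hφint hmnn hrange hU0 hv₀mem hδ key
      tstar htsI'
    have hMIcc : Set.Icc m M' ⊆ Set.Ici 0 := fun v hv => hmnn.trans hv.1
    have hUδnn : ∀ v ∈ Set.Icc m M', 0 ≤ (U v + δ)⁻¹ := fun v hv =>
      inv_nonneg.mpr (by linarith [hU0 v hv])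
    have hUδc : ContinuousOn (fun u => (U u + δ)⁻¹) (Set.Icc m M') := by
      refine ((hU.mono hMIcc).add continuousOn_const).inv₀ fun v hv => ?_
      exact ne_of_gt (by simp only [Pi.add_apply]; linarith [hU0 v hv])
    have hUδint : ∀ x y : ℝ, x ∈ Set.Icc m M' → y ∈ Set.Icc m M' →
        IntervalIntegrable (fun u => (U u + δ)⁻¹) volume x y := fun x y hx hy =>
      (hUδc.mono (uIcc_subset_Icc hx hy)).intervalIntegrable
    have hgamem : g a ∈ Set.Icc m M' := hrange a haI'
    have hgtmem : g tstar ∈ Set.Icc m M' := hrange tstar htsI'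
    have e1 : (∫ u in v₀..B, (U u + δ)⁻¹) ≤ ∫ u in v₀..(g tstar), (U u + δ)⁻¹ := by
      have hadd := integral_add_adjacent_intervals (hUδint v₀ B hv₀mem hBmem)
        (hUδint B (g tstar) hBmem hgtmem)
      have h2 : 0 ≤ ∫ u in B..(g tstar), (U u + δ)⁻¹ :=
        integral_nonneg hgt fun v hv =>
          hUδnn v ⟨hBmem.1.trans hv.1, hv.2.trans hgtM⟩
      linarith
    have e2 : (∫ u in v₀..(g a), (U u + δ)⁻¹) ≤ 0 := by
      rw [integral_symm]
      have h2 : 0 ≤ ∫ u in (g a)..v₀, (U u + δ)⁻¹ :=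
        integral_nonneg (by linarith) fun v hv =>
          hUδnn v ⟨hmga.trans hv.1, hv.2.trans hv₀mem.2⟩
      linarith
    have e3 : (∫ τ in a..tstar, φ τ) ≤ Φm := by
      have i1 := integral_add_adjacent_intervals (hψint t₀ a) (hψint a tstar)
      have i2 := integral_add_adjacent_intervals
        ((hψint t₀ a).trans (hψint a tstar)) (hψint tstar T)
      have n1 : 0 ≤ ∫ τ in t₀..a, ψ τ := integral_nonneg haI.1 fun τ _ => hψ τ
      have n2 : 0 ≤ ∫ τ in tstar..T, ψ τ :=
        integral_nonneg htstar.2.le fun τ _ => hψ τ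
      have n3 : (∫ τ in a..tstar, ψ τ) ≤ ∫ τ in t₀..T, ψ τ := by linarith
      calc (∫ τ in a..tstar, φ τ) = l * ∫ τ in a..tstar, ψ τ := by
            rw [← intervalIntegral.integral_const_mul]
        _ ≤ l * ∫ τ in t₀..T, ψ τ := mul_le_mul_of_nonneg_left n3 hl
        _ = Φm := rfl
    linarith
  have hfinal := mct_lemma hv₀pos hB0 hΦmnn hU hU0' h_int hδbound
  linarith



/-- Forward uniqueness for locally Lipschitz ODEs. -/
lemma sol_unique {W : Type*} [NormedAddCommGroup W] [NormedSpace ℝ W]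
    (Phat : ℝ → W → W)
    (hlip : ∀ (t : ℝ) (w : W), ∃ ε > (0:ℝ), ∃ K : NNReal,
        ∀ s ∈ Metric.ball t ε, LipschitzOnWith K (Phat s) (Metric.ball w ε))
    {t₀ T₁ T₂ : ℝ} {w₁ w₂ : ℝ → W}
    (h₁ : ∀ t ∈ Set.Ico t₀ T₁, HasDerivAt w₁ (Phat t (w₁ t)) t)
    (h₂ : ∀ t ∈ Set.Ico t₀ T₂, HasDerivAt w₂ (Phat t (w₂ t)) t)
    (h0 : w₁ t₀ = w₂ t₀) :
    ∀ t ∈ Set.Ico t₀ (min T₁ T₂), w₁ t = w₂ t := by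
  intro b hb
  have hbT₁ : b < T₁ := lt_of_lt_of_le hb.2 (min_le_left _ _)
  have hbT₂ : b < T₂ := lt_of_lt_of_le hb.2 (min_le_right _ _)
  have hsub : Set.Icc t₀ b ⊆ Set.Ico t₀ T₁ := fun s hs => ⟨hs.1, lt_of_le_of_lt hs.2 hbT₁⟩
  have hsub' : Set.Icc t₀ b ⊆ Set.Ico t₀ T₂ := fun s hs => ⟨hs.1, lt_of_le_of_lt hs.2 hbT₂⟩
  have hc₁ : ContinuousOn w₁ (Set.Ico t₀ T₁) :=
    fun t ht => (h₁ t ht).continuousAt.continuousWithinAt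
  have hc₂ : ContinuousOn w₂ (Set.Ico t₀ T₂) :=
    fun t ht => (h₂ t ht).continuousAt.continuousWithinAt
  set S : Set ℝ := {s | s ∈ Set.Icc t₀ b ∧ ∀ u ∈ Set.Icc t₀ s, w₁ u = w₂ u} with hS
  have ht₀S : t₀ ∈ S := ⟨⟨le_rfl, hb.1⟩, fun u hu => by
    have : u = t₀ := le_antisymm hu.2 hu.1
    rw [this]; exact h0⟩
  have hbdd : BddAbove S := ⟨b, fun x hx => hx.1.2⟩
  have hne : S.Nonempty := ⟨t₀, ht₀S⟩
  set c := sSup S with hc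
  have hc₀ : t₀ ≤ c := le_csSup hbdd ht₀S
  have hcb : c ≤ b := csSup_le hne fun x hx => hx.1.2
  have hlt : ∀ u ∈ Set.Ico t₀ c, w₁ u = w₂ u := by
    intro u hu
    obtain ⟨s, hsS, hus⟩ := (lt_csSup_iff hbdd hne).mp hu.2
    exact hsS.2 u ⟨hu.1, hus.le⟩
  have hwc : w₁ c = w₂ c := by
    rcases eq_or_lt_of_le hc₀ with h | h
    · rw [← h]; exact h0
    · have ht1 : Tendsto w₁ (𝓝[Set.Ico t₀ c] c) (𝓝 (w₁ c)) :=
        (hc₁.continuousWithinAt (hsub ⟨hc₀, hcb⟩)).mono_left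
          (nhdsWithin_mono _ fun x hx => hsub ⟨hx.1, hx.2.le.trans hcb⟩)
      have ht2 : Tendsto w₂ (𝓝[Set.Ico t₀ c] c) (𝓝 (w₂ c)) :=
        (hc₂.continuousWithinAt (hsub' ⟨hc₀, hcb⟩)).mono_left
          (nhdsWithin_mono _ fun x hx => hsub' ⟨hx.1, hx.2.le.trans hcb⟩)
      have hne' : (𝓝[Set.Ico t₀ c] c).NeBot :=
        (right_nhdsWithin_Ioo_neBot h).mono (nhdsWithin_mono _ Ioo_subset_Ico_self)
      exact tendsto_nhds_unique ht1
        (ht2.congr' (eventually_nhdsWithin_of_forall fun u hu => (hlt u hu).symm))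
  have hcS : c ∈ S := ⟨⟨hc₀, hcb⟩, fun u hu => by
    rcases eq_or_lt_of_le hu.2 with h | h
    · rw [h]; exact hwc
    · exact hlt u ⟨hu.1, h⟩⟩
  have hceq : c = b := by
    by_contra hne''
    have hcltb : c < b := lt_of_le_of_ne hcb hne''
    -- local uniqueness at c
    obtain ⟨ε, hε, K, hK⟩ := hlip c (w₁ c)
    obtain ⟨η₁, hη₁, hball₁⟩ := Metric.continuousAt_iff.mp
      ((h₁ c (hsub ⟨hc₀, hcb⟩)).continuousAt) ε hε
    obtain ⟨η₂, hη₂, hball₂⟩ := Metric.continuousAt_iff.mp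
      ((h₂ c (hsub' ⟨hc₀, hcb⟩)).continuousAt) ε hε
    set η := min (min η₁ η₂) (min (ε/2) (b - c)) with hη
    have hηpos : 0 < η := by
      refine lt_min (lt_min hη₁ hη₂) (lt_min (by linarith) (by linarith))
    have hcη : c + η ≤ b := by
      have : η ≤ b - c := (min_le_right _ _).trans (min_le_right _ _)
      linarith
    -- clamped vector field
    set vv : ℝ → W → W := fun t x => Phat (min (max t c) (c + η)) x with hvv
    have hclamp : ∀ t ∈ Set.Icc c (c + η), min (max t c) (c + η) = t := by
      intro t ht
      rw [max_eq_left ht.1, min_eq_left ht.2]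
    have hvvlip : ∀ t : ℝ, LipschitzOnWith K (vv t) (Metric.ball (w₁ c) ε) := by
      intro t
      refine hK _ ?_
      rw [Metric.mem_ball, Real.dist_eq]
      have h1 : c ≤ min (max t c) (c + η) := le_min (le_max_right _ _) (by linarith)
      have h2 : min (max t c) (c + η) ≤ c + η := min_le_right _ _
      have h3 : η < ε := lt_of_le_of_lt ((min_le_right _ _).trans (min_le_left _ _))
        (by linarith)
      rw [abs_lt]; constructor <;> linarith
    have hmem₁ : ∀ t ∈ Set.Ico c (c + η), w₁ t ∈ Metric.ball (w₁ c) ε := by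
      intro t ht
      refine hball₁ ?_
      rw [Real.dist_eq, abs_lt]
      have h4 : η ≤ η₁ := (min_le_left _ _).trans (min_le_left _ _)
      constructor <;> [linarith [ht.1]; linarith [ht.2]]
    have hmem₂ : ∀ t ∈ Set.Ico c (c + η), w₂ t ∈ Metric.ball (w₁ c) ε := by
      intro t ht
      rw [hwc]
      refine hball₂ ?_
      rw [Real.dist_eq, abs_lt]
      have h4 : η ≤ η₂ := (min_le_left _ _).trans (min_le_right _ _)
      constructor <;> [linarith [ht.1]; linarith [ht.2]]
    have hIccsub : Set.Icc c (c + η) ⊆ Set.Icc t₀ b :=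
      fun s hs => ⟨hc₀.trans hs.1, hs.2.trans hcη⟩
    have heq : Set.EqOn w₁ w₂ (Set.Icc c (c + η)) := by
      refine ODE_solution_unique_of_mem_Icc_right (fun t _ => hvvlip t)
        ((hc₁.mono fun s hs => hsub (hIccsub hs)))
        (fun t ht => ?_) (fun t ht => hmem₁ t ht)
        ((hc₂.mono fun s hs => hsub' (hIccsub hs)))
        (fun t ht => ?_) (fun t ht => hmem₂ t ht) hwc
      · have := h₁ t (hsub (hIccsub ⟨ht.1, ht.2.le⟩))
        rw [hvv]
        simp only [hclamp t ⟨ht.1, ht.2.le⟩]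
        exact this.hasDerivWithinAt
      · have := h₂ t (hsub' (hIccsub ⟨ht.1, ht.2.le⟩))
        rw [hvv]
        simp only [hclamp t ⟨ht.1, ht.2.le⟩]
        exact this.hasDerivWithinAt
    have : c + η ∈ S := by
      refine ⟨⟨hc₀.trans (by linarith), hcη⟩, fun u hu => ?_⟩
      rcases le_or_gt u c with h | h
      · exact hcS.2 u ⟨hu.1, h⟩
      · exact heq ⟨h.le, hu.2⟩
    have := le_csSup hbdd this
    linarith
  exact hcS.2 b ⟨hb.1, by rw [← hceq]⟩


lemma sol_FTC {W : Type*} [NormedAddCommGroup W] [NormedSpace ℝ W] [CompleteSpace W]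
    (Phat : ℝ → W → W)
    (hcont : ContinuousOn (fun p : ℝ × W => Phat p.1 p.2) (Set.Ici 0 ×ˢ Set.univ))
    {t₀ T : ℝ} (ht₀ : 0 ≤ t₀) {w : ℝ → W}
    (hderiv : ∀ t ∈ Set.Ico t₀ T, HasDerivAt w (Phat t (w t)) t) :
    ∀ s1 s2 : ℝ, s1 ∈ Set.Ico t₀ T → s2 ∈ Set.Ico t₀ T → s1 ≤ s2 →
      w s2 - w s1 = ∫ τ in s1..s2, Phat τ (w τ) := by
  have hwc : ContinuousOn w (Set.Ico t₀ T) :=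
    fun t ht => (hderiv t ht).continuousAt.continuousWithinAt
  have hPc : ContinuousOn (fun τ => Phat τ (w τ)) (Set.Ico t₀ T) := by
    refine hcont.comp (continuousOn_id.prodMk hwc) ?_
    exact fun τ hτ => ⟨ht₀.trans hτ.1, trivial⟩
  intro s1 s2 h1 h2 h12
  refine (integral_eq_sub_of_hasDerivAt ?_ ?_).symm
  · intro x hx
    rw [uIcc_of_le h12] at hx
    exact hderiv x ⟨h1.1.trans hx.1, lt_of_le_of_lt hx.2 h2.2⟩
  · refine (hPc.mono ?_).intervalIntegrable
    rw [uIcc_of_le h12]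
    exact fun x hx => ⟨h1.1.trans hx.1, lt_of_le_of_lt hx.2 h2.2⟩


/-- Global existence, Lipschitz-Lyapunov version: if `Π̂ ∈ C(ℝ₊ × W, W)` is locally
Lipschitz in `w` with local existence for all initial data and bounded on bounded sets, and
there exist `R > 0`, `V ∈ C(W, ℝ₊)` Lipschitz on `{‖w‖ ≥ R}` with `V(w) → ∞` as
`‖w‖ → ∞`, and `U ∈ C(ℝ₊)`, locally integrable `ψ ≥ 0` with `∫^∞ du/U(u) = ∞`, such that
`‖Π̂(t,w)‖ ≤ U(V(w)) ψ(t)` for all `t ≥ 0`, `‖w‖ ≥ R`, then every solution is global. -/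
theorem stmt_17
    {W : Type*} [NormedAddCommGroup W] [NormedSpace ℝ W] [CompleteSpace W]
    (Phat : ℝ → W → W)
    (hcont : ContinuousOn (fun p : ℝ × W => Phat p.1 p.2) (Set.Ici 0 ×ˢ Set.univ))
    (hlip : ∀ (t : ℝ) (w : W), ∃ ε > (0:ℝ), ∃ K : NNReal,
        ∀ s ∈ Metric.ball t ε, LipschitzOnWith K (Phat s) (Metric.ball w ε))
    (hexist : ∀ t₀ ≥ (0:ℝ), ∀ w₀ : W, ∃ T > t₀, ∃ w : ℝ → W, w t₀ = w₀ ∧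
        ∀ t ∈ Set.Ico t₀ T, HasDerivAt w (Phat t (w t)) t)
    (hbound : ∀ b₁ b₂ : ℝ, ∃ C : ℝ, ∀ t ∈ Set.Icc 0 b₁, ∀ w : W, ‖w‖ ≤ b₂ → ‖Phat t w‖ ≤ C)
    (R : ℝ) (hR : 0 < R)
    (V : W → ℝ) (hVcont : Continuous V) (hVnonneg : ∀ w, 0 ≤ V w)
    -- `V` satisfies a Lipschitz condition on `{‖w‖ ≥ R}`
    (hVlip : ∃ l ≥ (0:ℝ), ∀ w₁ w₂ : W, R ≤ ‖w₁‖ → R ≤ ‖w₂‖ →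
        |V w₁ - V w₂| ≤ l * ‖w₁ - w₂‖)
    -- `V(w) → ∞` as `‖w‖ → ∞`
    (hVinf : ∀ c : ℝ, ∃ ρ : ℝ, ∀ w : W, ρ ≤ ‖w‖ → c ≤ V w)
    (U : ℝ → ℝ) (hU : ContinuousOn U (Set.Ici 0))
    (ψ : ℝ → ℝ) (hψ : ∀ t, 0 ≤ ψ t)
    (hψint : ∀ a b : ℝ, IntervalIntegrable ψ volume a b)
    -- `∫^∞ du / U(u) = ∞`
    (hUdiv : ∀ u₀ > (0:ℝ),
        Tendsto (fun b => ∫ u in u₀..b, (U u)⁻¹) atTop atTop)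
    (hineq : ∀ t ∈ Set.Ici (0:ℝ), ∀ w : W, R ≤ ‖w‖ → ‖Phat t w‖ ≤ U (V w) * ψ t)
    (t₀ : ℝ) (ht₀ : 0 ≤ t₀) (w₀ : W) :
    ∃ w : ℝ → W, w t₀ = w₀ ∧ ∀ t ∈ Set.Ici t₀, HasDerivAt w (Phat t (w t)) t := by
  classical
  set line : ℝ → W := fun t => w₀ + (t - t₀) • Phat t₀ w₀ with hline
  have hlined : ∀ t : ℝ, HasDerivAt line (Phat t₀ w₀) t := by
    intro t
    have h1 : HasDerivAt (fun s : ℝ => s - t₀) 1 t := (hasDerivAt_id t).sub_const t₀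
    have h2 := h1.smul_const (Phat t₀ w₀)
    rw [one_smul] at h2
    exact h2.const_add w₀
  have hlinet₀ : line t₀ = w₀ := by simp [hline]
  set A : Set ℝ := {T | t₀ < T ∧ ∃ z : ℝ → W, z t₀ = w₀ ∧
      ∀ t ∈ Set.Ico t₀ T, HasDerivAt z (Phat t (z t)) t} with hA
  have hAne : A.Nonempty := by
    obtain ⟨T, hT, z, hz0, hzd⟩ := hexist t₀ ht₀ w₀
    exact ⟨T, hT, z, hz0, hzd⟩
  have hpick : ∀ t : ℝ, ∃ p : (ℝ → W) × ℝ, p.1 t₀ = w₀ ∧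
      (∀ s ∈ Set.Ico t₀ p.2, HasDerivAt p.1 (Phat s (p.1 s)) s) ∧
      ((∃ T' ∈ A, t < T') → t < p.2 ∧ p.2 ∈ A) := by
    intro t
    by_cases h : ∃ T' ∈ A, t < T'
    · obtain ⟨T', hT'A, htT'⟩ := h
      obtain ⟨hT't₀, z, hz0, hzd⟩ := hT'A
      exact ⟨(z, T'), hz0, hzd, fun _ => ⟨htT', ⟨hT't₀, z, hz0, hzd⟩⟩⟩
    · obtain ⟨T, hTt₀, z, hz0, hzd⟩ := hAne
      exact ⟨(z, T), hz0, hzd, fun hh => absurd hh h⟩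
  choose pick hpick0 hpickd hpickA using hpick
  set glue : ℝ → W := fun t => if t ≤ t₀ then line t else (pick t).1 t with hglue
  have hglue0 : glue t₀ = w₀ := by simp [hglue, hlinet₀]
  -- glue agrees with any solution on its interval
  have hagree : ∀ T ∈ A, ∀ z : ℝ → W, z t₀ = w₀ →
      (∀ s ∈ Set.Ico t₀ T, HasDerivAt z (Phat s (z s)) s) →
      ∀ t ∈ Set.Ico t₀ T, glue t = z t := by
    intro T hTA z hz0 hzd t ht
    rcases eq_or_lt_of_le ht.1 with h | h
    · rw [← h, hglue0, ← h] at *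
      rw [← hz0]
    · have hex : ∃ T' ∈ A, t < T' := ⟨T, hTA, ht.2⟩
      obtain ⟨h1, h2⟩ := hpickA t hex
      have hu := sol_unique Phat hlip (hpickd t) hzd (by rw [hpick0 t, hz0])
        t ⟨ht.1, lt_min h1 ht.2⟩
      rw [hglue]
      simp only [not_le.mpr h, if_false]
      exact hu
  -- glue solves the equation at covered times
  have hgluesol : ∀ t, (∃ T ∈ A, t < T) → t₀ ≤ t →
      HasDerivAt glue (Phat t (glue t)) t := by
    intro t hex htt₀
    obtain ⟨T, hTA, htT⟩ := hex
    obtain ⟨hTt₀, z, hz0, hzd⟩ := hTA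
    have hTA' : T ∈ A := ⟨hTt₀, z, hz0, hzd⟩
    have hag : ∀ s ∈ Set.Ico t₀ T, glue s = z s := hagree T hTA' z hz0 hzd
    rcases eq_or_lt_of_le htt₀ with h | h
    · -- t = t₀
      have ht₀T : t₀ < T := hTt₀
      have h1 : HasDerivWithinAt glue (Phat t₀ w₀) (Set.Ico t₀ T) t₀ := by
        have hd := (hzd t₀ ⟨le_rfl, ht₀T⟩).hasDerivWithinAt (s := Set.Ico t₀ T)
        rw [hz0] at hd
        exact hd.congr (fun s hs => hag s hs) (by rw [hglue0, hz0])
      have h2 : HasDerivWithinAt glue (Phat t₀ w₀) (Set.Iic t₀) t₀ := by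
        refine ((hlined t₀).hasDerivWithinAt).congr (fun s hs => ?_) (by rw [hglue0, hlinet₀])
        rw [hglue]; exact if_pos hs
      have h3 := h1.union h2
      have h4 : Set.Ico t₀ T ∪ Set.Iic t₀ = Set.Iio T := by
        ext x
        simp only [Set.mem_union, Set.mem_Ico, Set.mem_Iic, Set.mem_Iio]
        constructor
        · rintro (⟨_, hx⟩ | hx)
          · exact hx
          · exact lt_of_le_of_lt hx ht₀T
        · intro hx
          rcases le_or_gt x t₀ with h5 | h5
          · exact Or.inr h5
          · exact Or.inl ⟨h5.le, hx⟩
      rw [h4] at h3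
      have h6 := h3.hasDerivAt (Iio_mem_nhds ht₀T)
      rw [← h, hglue0]
      exact h6
    · -- t₀ < t
      have hev : glue =ᶠ[𝓝 t] z := by
        filter_upwards [Ioo_mem_nhds h htT] with s hs
        exact hag s ⟨hs.1.le, hs.2⟩
      have hd := (hzd t ⟨htt₀, htT⟩).congr_of_eventuallyEq hev
      rwa [← hag t ⟨htt₀, htT⟩] at hd
  by_cases hbdd : BddAbove A
  swap
  · -- unbounded case: glue is a global solution
    refine ⟨glue, hglue0, fun t ht => ?_⟩
    obtain ⟨T, hTA, hT⟩ := not_bddAbove_iff.mp hbdd t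
    exact hgluesol t ⟨T, hTA, hT⟩ ht
  exfalso
  set Tstar := sSup A with hTstardef
  obtain ⟨T1, hT1A⟩ := hAne
  have hTstargt : t₀ < Tstar := lt_of_lt_of_le hT1A.1 (le_csSup hbdd hT1A)
  have hsolstar : ∀ t ∈ Set.Ico t₀ Tstar, HasDerivAt glue (Phat t (glue t)) t := by
    intro t ht
    obtain ⟨T, hTA, h⟩ := (lt_csSup_iff hbdd ⟨T1, hT1A⟩).mp ht.2
    exact hgluesol t ⟨T, hTA, h⟩ ht.1
  obtain ⟨M, hM⟩ := apriori_bound Phat hcont R hR V hVcont hVnonneg hVlip hVinf U hU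
    ψ hψ hψint hUdiv hineq ht₀ hTstargt hsolstar
  obtain ⟨C, hC⟩ := hbound Tstar M
  have hC0 : 0 ≤ C := le_trans (norm_nonneg _)
    (hC t₀ ⟨ht₀, hTstargt.le⟩ (glue t₀) (hM t₀ ⟨le_rfl, hTstargt⟩))
  have hFTCg := sol_FTC Phat hcont ht₀ hsolstar
  have hlipglue : ∀ s1 s2 : ℝ, s1 ∈ Set.Ico t₀ Tstar → s2 ∈ Set.Ico t₀ Tstar → s1 ≤ s2 →
      ‖glue s2 - glue s1‖ ≤ C * (s2 - s1) := by
    intro s1 s2 h1 h2 h12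
    rw [hFTCg s1 s2 h1 h2 h12]
    have hb : ∀ x ∈ Set.uIoc s1 s2, ‖Phat x (glue x)‖ ≤ C := by
      intro x hx
      rw [uIoc_of_le h12] at hx
      have hx' : x ∈ Set.Ico t₀ Tstar := ⟨h1.1.trans hx.1.le, lt_of_le_of_lt hx.2 h2.2⟩
      exact hC x ⟨ht₀.trans hx'.1, hx'.2.le⟩ (glue x) (hM x hx')
    have := intervalIntegral.norm_integral_le_of_norm_le_const hb
    calc ‖∫ τ in s1..s2, Phat τ (glue τ)‖ ≤ C * |s2 - s1| := this
      _ = C * (s2 - s1) := by rw [abs_of_nonneg (by linarith)]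
  -- a sequence approaching Tstar
  set d := Tstar - t₀ with hd
  have hdpos : 0 < d := by rw [hd]; linarith
  set tn : ℕ → ℝ := fun n => Tstar - d / (n + 1) with htn
  have htnmem : ∀ n : ℕ, tn n ∈ Set.Ico t₀ Tstar := by
    intro n
    have hpos : 0 < d / ((n:ℝ) + 1) := div_pos hdpos (by positivity)
    have hle : d / ((n:ℝ) + 1) ≤ d := by
      rw [div_le_iff₀ (by positivity)]
      nlinarith [Nat.cast_nonneg (α := ℝ) n]
    constructor
    · rw [htn]; simp only [hd]; linarith
    · rw [htn]; simp only; linarith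
  have htnmono : ∀ n m : ℕ, n ≤ m → tn n ≤ tn m := by
    intro n m hnm
    have h1 : d / ((m:ℝ) + 1) ≤ d / ((n:ℝ) + 1) := by
      apply div_le_div_of_nonneg_left hdpos.le (by positivity)
      exact_mod_cast by linarith [(Nat.cast_le (α := ℝ)).mpr hnm]
    rw [htn]; simp only; linarith
  have hcauchy : CauchySeq fun n => glue (tn n) := by
    rw [Metric.cauchySeq_iff']
    intro ε hε
    obtain ⟨N, hN⟩ := exists_nat_gt (C * d / ε)
    refine ⟨N, fun n hn => ?_⟩
    have h2 := hlipglue (tn N) (tn n) (htnmem N) (htnmem n) (htnmono N n hn)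
    rw [dist_eq_norm]
    have h3 : tn n - tn N ≤ d / ((N:ℝ) + 1) := by
      have hpos : 0 < d / ((n:ℝ) + 1) := div_pos hdpos (by positivity)
      rw [htn]; simp only; linarith
    have h4 : C * (tn n - tn N) ≤ C * (d / ((N:ℝ) + 1)) :=
      mul_le_mul_of_nonneg_left h3 hC0
    have h5 : C * (d / ((N:ℝ) + 1)) < ε := by
      have hN' : C * d < N * ε := (div_lt_iff₀ hε).mp hN
      rw [← mul_div_assoc, div_lt_iff₀ (by positivity : (0:ℝ) < (N:ℝ) + 1)]
      nlinarith [Nat.cast_nonneg (α := ℝ) N]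
    calc ‖glue (tn n) - glue (tn N)‖ ≤ C * (tn n - tn N) := h2
      _ ≤ C * (d / ((N:ℝ) + 1)) := h4
      _ < ε := h5
  obtain ⟨L, hL⟩ := cauchySeq_tendsto_of_complete hcauchy
  have htnT : Tendsto tn atTop (𝓝 Tstar) := by
    have h0 : Tendsto (fun n : ℕ => d / ((n:ℝ) + 1)) atTop (𝓝 0) := by
      have := tendsto_one_div_add_atTop_nhds_zero_nat (𝕜 := ℝ)
      have h2 := this.const_mul d
      simpa [div_eq_mul_inv, mul_comm] using h2
    have := tendsto_const_nhds (x := Tstar) (f := atTop (α := ℕ)) |>.sub h0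
    simpa [htn] using this
  have hglueT : Tendsto glue (𝓝[Set.Ico t₀ Tstar] Tstar) (𝓝 L) := by
    rw [Metric.tendsto_nhdsWithin_nhds]
    intro ε hε
    have h1 : Tendsto (fun n => C * (Tstar - tn n)) atTop (𝓝 0) := by
      have := (tendsto_const_nhds (x := Tstar) (f := atTop (α := ℕ))).sub htnT
      have h2 := this.const_mul C
      simpa using h2
    have h2 := h1.eventually_lt_const (show (0:ℝ) < ε/2 by linarith)
    have h3 := hL.eventually (Metric.ball_mem_nhds L (show (0:ℝ) < ε/2 by linarith))
    obtain ⟨n, hn1, hn2⟩ := (h2.and h3).exists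
    have hδpos : 0 < Tstar - tn n := by linarith [(htnmem n).2]
    refine ⟨Tstar - tn n, hδpos, fun s hs hsd => ?_⟩
    rw [Real.dist_eq, abs_lt] at hsd
    have h4 : tn n ≤ s := by linarith [hsd.1]
    have h5 := hlipglue (tn n) s (htnmem n) hs h4
    have h6 : C * (s - tn n) ≤ C * (Tstar - tn n) :=
      mul_le_mul_of_nonneg_left (by linarith [hs.2]) hC0
    have h7 : dist (glue s) (glue (tn n)) ≤ C * (s - tn n) := by
      rw [dist_eq_norm]; exact h5
    have hn1' : C * (Tstar - tn n) < ε/2 := hn1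
    have hn2' : dist (glue (tn n)) L < ε/2 := Metric.mem_ball.mp hn2
    calc dist (glue s) L ≤ dist (glue s) (glue (tn n)) + dist (glue (tn n)) L :=
          dist_triangle _ _ _
      _ < ε/2 + ε/2 := add_lt_add (lt_of_le_of_lt (h7.trans h6) hn1') hn2'
      _ = ε := add_halves ε
  -- extension beyond Tstar
  have hTstar0 : (0:ℝ) ≤ Tstar := ht₀.trans hTstargt.le
  obtain ⟨T₂, hT₂, z, hz0, hzd⟩ := hexist Tstar hTstar0 L
  have ht₀T₂ : t₀ < T₂ := hTstargt.trans hT₂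
  set wext : ℝ → W := fun t => if t < Tstar then glue t else z t with hwext
  have hwextglue : ∀ t, t < Tstar → wext t = glue t := fun t ht => by
    rw [hwext]; exact if_pos ht
  have hwextz : ∀ t, Tstar ≤ t → wext t = z t := fun t ht => by
    rw [hwext]; exact if_neg (not_lt.mpr ht)
  have hwextTstar : wext Tstar = L := by rw [hwextz Tstar le_rfl, hz0]
  have hwext0 : wext t₀ = w₀ := by rw [hwextglue t₀ hTstargt, hglue0]
  have hzc : ContinuousOn z (Set.Ico Tstar T₂) :=
    fun t ht => (hzd t ht).continuousAt.continuousWithinAt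
  have hwextc : ContinuousOn wext (Set.Ico t₀ T₂) := by
    intro t ht
    rcases lt_trichotomy t Tstar with h | h | h
    · have hev : wext =ᶠ[𝓝 t] glue := by
        filter_upwards [Iio_mem_nhds h] with s hs
        exact hwextglue s hs
      exact (((hsolstar t ⟨ht.1, h⟩).continuousAt).congr hev.symm).continuousWithinAt
    · rw [h]
      rw [ContinuousWithinAt, hwextTstar]
      have hsub : Set.Ico t₀ T₂ ⊆ Set.Ico t₀ Tstar ∪ Set.Ico Tstar T₂ := by
        intro x hx
        rcases lt_or_ge x Tstar with h1 | h1
        · exact Or.inl ⟨hx.1, h1⟩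
        · exact Or.inr ⟨h1, hx.2⟩
      refine Tendsto.mono_left ?_ (nhdsWithin_mono _ hsub)
      rw [nhdsWithin_union]
      rw [tendsto_sup]
      constructor
      · refine hglueT.congr' ?_
        exact eventually_nhdsWithin_of_forall fun s hs => (hwextglue s hs.2).symm
      · have h1 : Tendsto z (𝓝[Set.Ico Tstar T₂] Tstar) (𝓝 (z Tstar)) :=
          hzc.continuousWithinAt ⟨le_rfl, hT₂⟩
        rw [hz0] at h1
        refine h1.congr' ?_
        exact eventually_nhdsWithin_of_forall fun s hs => (hwextz s hs.1).symm
    · have hev : wext =ᶠ[𝓝 t] z := by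
        filter_upwards [Ioi_mem_nhds h] with s hs
        exact hwextz s hs.le
      exact (((hzd t ⟨h.le, ht.2⟩).continuousAt).congr hev.symm).continuousWithinAt
  set F : ℝ → W := fun τ => Phat τ (wext τ) with hF
  have hFc : ContinuousOn F (Set.Ico t₀ T₂) := by
    refine hcont.comp (continuousOn_id.prodMk hwextc) ?_
    exact fun τ hτ => ⟨ht₀.trans hτ.1, trivial⟩
  have hFint : ∀ s1 s2 : ℝ, s1 ∈ Set.Ico t₀ T₂ → s2 ∈ Set.Ico t₀ T₂ → s1 ≤ s2 →
      IntervalIntegrable F volume s1 s2 := by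
    intro s1 s2 h1 h2 h12
    refine (hFc.mono ?_).intervalIntegrable
    rw [uIcc_of_le h12]
    exact fun x hx => ⟨h1.1.trans hx.1, lt_of_le_of_lt hx.2 h2.2⟩
  have hTstarmem : Tstar ∈ Set.Ico t₀ T₂ := ⟨hTstargt.le, hT₂⟩
  have ht₀mem : t₀ ∈ Set.Ico t₀ T₂ := ⟨le_rfl, ht₀T₂⟩
  have hrep1 : ∀ t ∈ Set.Ico t₀ Tstar, wext t = w₀ + ∫ τ in t₀..t, F τ := by
    intro t ht
    have h1 := hFTCg t₀ t ⟨le_rfl, hTstargt⟩ ht ht.1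
    have h2 : Set.EqOn (fun τ => Phat τ (glue τ)) F (Set.uIcc t₀ t) := by
      intro τ hτ
      rw [uIcc_of_le ht.1] at hτ
      simp only [hF]
      rw [hwextglue τ (lt_of_le_of_lt hτ.2 ht.2)]
    rw [intervalIntegral.integral_congr h2] at h1
    rw [hwextglue t ht.2]
    rw [← h1, hglue0]
    abel
  have hrepTstar : wext Tstar = w₀ + ∫ τ in t₀..Tstar, F τ := by
    have h1 : Tendsto (fun n => wext (tn n)) atTop (𝓝 L) := by
      refine hL.congr fun n => ?_
      rw [hwextglue _ (htnmem n).2]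
    have hprimc : ContinuousOn (fun x => ∫ τ in t₀..x, F τ) (Set.Icc t₀ Tstar) := by
      have := continuousOn_primitive_interval'
        (hFint t₀ Tstar ht₀mem hTstarmem hTstargt.le) (a := t₀) (by simp [Set.left_mem_uIcc])
      rwa [uIcc_of_le hTstargt.le] at this
    have htnin : Tendsto tn atTop (𝓝[Set.Icc t₀ Tstar] Tstar) := by
      refine tendsto_nhdsWithin_of_tendsto_nhds_of_eventually_within _ htnT ?_
      exact Eventually.of_forall fun n => ⟨(htnmem n).1, (htnmem n).2.le⟩
    have h2 : Tendsto (fun n => w₀ + ∫ τ in t₀..(tn n), F τ) atTop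
        (𝓝 (w₀ + ∫ τ in t₀..Tstar, F τ)) := by
      refine Tendsto.const_add _ ?_
      exact (hprimc.continuousWithinAt (Set.right_mem_Icc.mpr hTstargt.le)).tendsto.comp htnin
    have h3 : Tendsto (fun n => wext (tn n)) atTop (𝓝 (w₀ + ∫ τ in t₀..Tstar, F τ)) :=
      h2.congr fun n => (hrep1 (tn n) (htnmem n)).symm
    rw [hwextTstar]
    exact tendsto_nhds_unique h1 h3
  have hrep2 : ∀ t ∈ Set.Ico t₀ T₂, wext t = w₀ + ∫ τ in t₀..t, F τ := by
    intro t ht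
    rcases lt_or_ge t Tstar with h | h
    · exact hrep1 t ⟨ht.1, h⟩
    · have hzFTC := sol_FTC Phat hcont hTstar0 hzd Tstar t ⟨le_rfl, hT₂⟩ ⟨h, ht.2⟩ h
      have hcg : Set.EqOn (fun τ => Phat τ (z τ)) F (Set.uIcc Tstar t) := by
        intro τ hτ
        rw [uIcc_of_le h] at hτ
        simp only [hF]
        rw [hwextz τ hτ.1]
      rw [intervalIntegral.integral_congr hcg] at hzFTC
      have hadd := integral_add_adjacent_intervals
        (hFint t₀ Tstar ht₀mem hTstarmem hTstargt.le)
        (hFint Tstar t hTstarmem ht h)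
      have h7 : wext t = wext Tstar + ∫ τ in Tstar..t, F τ := by
        rw [hwextz t h, hwextz Tstar le_rfl]
        rw [← hzFTC]
        abel
      rw [h7, hrepTstar, add_assoc, hadd]
  -- wext is a solution on Ico t₀ T₂
  have hextsol : ∀ t ∈ Set.Ico t₀ T₂, HasDerivAt wext (Phat t (wext t)) t := by
    intro t ht
    rcases eq_or_lt_of_le ht.1 with h | h
    · -- t = t₀
      subst h
      have hmemI : Set.Ico t₀ T₂ ∈ 𝓝[Set.Ioi t₀] t₀ := by
        refine Filter.mem_of_superset (Filter.inter_mem self_mem_nhdsWithin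
          (nhdsWithin_le_nhds (Iio_mem_nhds ht₀T₂))) ?_
        exact fun x hx => ⟨hx.1.le, hx.2⟩
      have hmeas : StronglyMeasurableAtFilter F (𝓝[Set.Ioi t₀] t₀) volume :=
        ⟨Set.Ico t₀ T₂, hmemI, hFc.aestronglyMeasurable measurableSet_Ico⟩
      have hcw : ContinuousWithinAt F (Set.Ioi t₀) t₀ :=
        (hFc.continuousWithinAt ht).mono_of_mem_nhdsWithin hmemI
      have hd1 : HasDerivWithinAt (fun x => ∫ τ in t₀..x, F τ) (F t₀) (Set.Ici t₀) t₀ :=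
        intervalIntegral.integral_hasDerivWithinAt_right
          (hFint t₀ t₀ ht ht le_rfl) hmeas hcw
      have hd2 : HasDerivWithinAt (fun x => w₀ + ∫ τ in t₀..x, F τ) (F t₀)
          (Set.Ici t₀) t₀ := hd1.const_add w₀
      have hd3 : HasDerivWithinAt wext (F t₀) (Set.Ico t₀ T₂) t₀ :=
        (hd2.mono Set.Ico_subset_Ici_self).congr (fun s hs => hrep2 s hs) (hrep2 t₀ ht)
      have hd4 : HasDerivWithinAt wext (F t₀) (Set.Iic t₀) t₀ := by
        have hFt : F t₀ = Phat t₀ w₀ := by simp only [hF]; rw [hwext0]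
        rw [hFt]
        refine ((hlined t₀).hasDerivWithinAt).congr (fun s hs => ?_) ?_
        · rw [hwextglue s (lt_of_le_of_lt hs hTstargt), hglue]
          exact if_pos hs
        · rw [hwext0, hlinet₀]
      have h3 := hd3.union hd4
      have h4 : Set.Ico t₀ T₂ ∪ Set.Iic t₀ = Set.Iio T₂ := by
        ext x
        simp only [Set.mem_union, Set.mem_Ico, Set.mem_Iic, Set.mem_Iio]
        constructor
        · rintro (⟨_, hx⟩ | hx)
          · exact hx
          · exact lt_of_le_of_lt hx ht₀T₂
        · intro hx
          rcases le_or_gt x t₀ with h5 | h5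
          · exact Or.inr h5
          · exact Or.inl ⟨h5.le, hx⟩
      rw [h4] at h3
      exact h3.hasDerivAt (Iio_mem_nhds ht₀T₂)
    · -- t₀ < t
      have hIoo : ContinuousOn F (Set.Ioo t₀ T₂) := hFc.mono fun s hs => ⟨hs.1.le, hs.2⟩
      have hFca : ContinuousAt F t := hIoo.continuousAt (Ioo_mem_nhds h ht.2)
      have hmeas : StronglyMeasurableAtFilter F (𝓝 t) volume :=
        hIoo.stronglyMeasurableAtFilter isOpen_Ioo t ⟨h, ht.2⟩
      have hd1 : HasDerivAt (fun x => ∫ τ in t₀..x, F τ) (F t) t :=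
        intervalIntegral.integral_hasDerivAt_right
          (hFint t₀ t ht₀mem ht ht.1) hmeas hFca
      have hd2 : HasDerivAt (fun x => w₀ + ∫ τ in t₀..x, F τ) (F t) t := hd1.const_add w₀
      have hev : wext =ᶠ[𝓝 t] fun x => w₀ + ∫ τ in t₀..x, F τ := by
        filter_upwards [Ioo_mem_nhds h ht.2] with s hs
        exact hrep2 s ⟨hs.1.le, hs.2⟩
      exact hd2.congr_of_eventuallyEq hev
  have hT₂A : T₂ ∈ A := ⟨ht₀T₂, wext, hwext0, hextsol⟩
  have := le_csSup hbdd hT₂A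
  rw [← hTstardef] at this
  linarith
end
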